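/- arXiv:2508.07347 — 5 statements merged into one kernel-verified Lean document; each statement's English description precedes it below -/
import Mathlib

section
/- Let S be a maximal triangular subalgebra of B(H) and let p ∈ lat(S). Then p b (1 − p) ∈ S for every b ∈ B(H); that is, p B(H) p⊥ ⊆ S. -/
set_option maxHeartbeats 1000000
set_option synthInstance.maxHeartbeats 400000

open ContinuousLinearMap in
/-- The diagonal `S ∩ S*` of a subalgebra of `B(H)`. -/
def diagonal {H : Type*} [NormedAddCommGroup H] [InnerProductSpace ℂ H] [CompleteSpace H]
    (S : Subalgebra ℂ (H →L[ℂ] H)) : Set (H →L[ℂ] H) :=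
  {a | a ∈ S ∧ adjoint a ∈ S}

/-- A set of operators is maximal abelian in `B(H)` if it is commutative and contains
every operator commuting with all of its members. -/
def IsMaxAbelian {H : Type*} [NormedAddCommGroup H] [InnerProductSpace ℂ H]
    (D : Set (H →L[ℂ] H)) : Prop :=
  (∀ a ∈ D, ∀ b ∈ D, a * b = b * a) ∧
  (∀ b : H →L[ℂ] H, (∀ a ∈ D, a * b = b * a) → b ∈ D)

/-- A (unital) subalgebra of `B(H)` is triangular if its diagonal `S ∩ S*` is
maximal abelian in `B(H)`. -/
def IsTriangular {H : Type*} [NormedAddCommGroup H] [InnerProductSpace ℂ H] [CompleteSpace H]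
    (S : Subalgebra ℂ (H →L[ℂ] H)) : Prop :=
  IsMaxAbelian (diagonal S)

/-- `S` is maximal triangular if it is triangular and not properly contained in any
other triangular subalgebra. -/
def IsMaxTriangular {H : Type*} [NormedAddCommGroup H] [InnerProductSpace ℂ H] [CompleteSpace H]
    (S : Subalgebra ℂ (H →L[ℂ] H)) : Prop :=
  IsTriangular S ∧ ∀ T : Subalgebra ℂ (H →L[ℂ] H), IsTriangular T → S ≤ T → S = T

open ContinuousLinearMap in
/-- `p ∈ lat S`: `p` is an orthogonal projection with `a p = p a p` for all `a ∈ S`. -/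
def InLat {H : Type*} [NormedAddCommGroup H] [InnerProductSpace ℂ H] [CompleteSpace H]
    (S : Subalgebra ℂ (H →L[ℂ] H)) (p : H →L[ℂ] H) : Prop :=
  p * p = p ∧ adjoint p = p ∧ ∀ a ∈ S, a * p = p * a * p

/-- If `S` is maximal triangular and `p ∈ lat(S)` then `p B(H) p⊥ ⊆ S`. -/
theorem pBHpperp_subset {H : Type*} [NormedAddCommGroup H] [InnerProductSpace ℂ H]
    [CompleteSpace H] {S : Subalgebra ℂ (H →L[ℂ] H)} (hS : IsMaxTriangular S)
    {p : H →L[ℂ] H} (hp : InLat S p) (b : H →L[ℂ] H) :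
    p * b * (1 - p) ∈ S := by
  obtain ⟨⟨hcomm, hmax⟩, hmaxT⟩ := hS
  obtain ⟨hp1, hp2, hp3⟩ := hp
  have hpstar : star p = p := by rw [ContinuousLinearMap.star_eq_adjoint, hp2]
  -- Step 1: p commutes with everything in the diagonal, hence p ∈ S.
  have hpd : p ∈ diagonal S := by
    apply hmax
    rintro a ⟨haS, haA⟩
    have h1 : a * p = p * a * p := hp3 a haS
    have h2 : ContinuousLinearMap.adjoint a * p = p * ContinuousLinearMap.adjoint a * p :=
      hp3 _ haA
    have h3 : p * a = p * a * p := by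
      have := congrArg star h2
      simpa [star_mul, hpstar, ← ContinuousLinearMap.star_eq_adjoint, mul_assoc] using this
    rw [h1, ← h3]
  have hpS : p ∈ S := hpd.1
  set q : H →L[ℂ] H := 1 - p with hqdef
  have hqS : q ∈ S := sub_mem (one_mem S) hpS
  have hqp : q * p = 0 := by simp [hqdef, sub_mul, hp1]
  have hpq : p * q = 0 := by simp [hqdef, mul_sub, hp1]
  have hqq : q * q = q := by simp [hqdef, sub_mul, mul_sub, hp1]
  have hqstar : star q = q := by simp [hqdef, hpstar]
  -- lat relations
  have hlatq : ∀ c ∈ S, q * c = q * c * q := by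
    intro c hc
    have h0 : q * c * p = 0 := by
      have := hp3 c hc
      simp [hqdef, sub_mul, this]
    calc q * c = q * c * (p + q) := by simp [hqdef]
    _ = q * c * q := by rw [mul_add, h0, zero_add]
  -- Define the enlarged algebra T = S + p B(H) q.
  let T : Subalgebra ℂ (H →L[ℂ] H) :=
    { carrier := {t | t - p * t * q ∈ S}
      mul_mem' := by
        rintro t s (ha : t - p * t * q ∈ S) (hc : s - p * s * q ∈ S)
        set a := t - p * t * q with hadef
        set c := s - p * s * q with hcdef
        set x := p * t * q with hxdef
        set y := p * s * q with hydef
        have ht : t = a + x := by rw [hadef]; noncomm_ring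
        have hs : s = c + y := by rw [hcdef]; noncomm_ring
        have hap : a * p = p * a * p := hp3 a ha
        have hqc : q * c = q * c * q := hlatq c hc
        have e1 : a * y - p * (a * y) * q = 0 := by
          have : p * (a * y) * q = a * y := by
            calc p * (a * (p * s * q)) * q = (p * (a * p)) * s * (q * q) := by
                  noncomm_ring
            _ = (p * (p * a * p)) * s * q := by rw [hap, hqq]
            _ = (p * a * p) * s * q := by rw [← mul_assoc, ← mul_assoc, hp1]
            _ = (a * p) * s * q := by rw [← hap]
            _ = a * y := by rw [hydef]; noncomm_ring
          rw [this, sub_self]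
        have e2 : x * c - p * (x * c) * q = 0 := by
          have : p * (x * c) * q = x * c := by
            calc p * ((p * t * q) * c) * q = (p * p) * t * ((q * c) * q) := by noncomm_ring
            _ = (p * p) * t * (q * c) := by rw [← hqc]
            _ = p * t * (q * c) := by rw [hp1]
            _ = x * c := by rw [hxdef]; noncomm_ring
          rw [this, sub_self]
        have e3 : x * y = 0 := by
          calc x * y = p * t * (q * p) * s * q := by rw [hxdef, hydef]; noncomm_ring
          _ = 0 := by rw [hqp]; simp
        have expand : t * s - p * (t * s) * q =
            (a * c - p * (a * c) * q) + (a * y - p * (a * y) * q)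
              + (x * c - p * (x * c) * q) + (x * y - p * (x * y) * q) := by
          rw [ht, hs]; noncomm_ring
        show t * s - p * (t * s) * q ∈ S
        rw [expand, e1, e2, e3]
        simpa using sub_mem (mul_mem ha hc)
          (mul_mem (mul_mem hpS (mul_mem ha hc)) hqS)
      one_mem' := by
        show (1 : H →L[ℂ] H) - p * 1 * q ∈ S
        simpa [hpq] using one_mem S
      add_mem' := by
        rintro t s (ha : t - p * t * q ∈ S) (hc : s - p * s * q ∈ S)
        show t + s - p * (t + s) * q ∈ S
        have : t + s - p * (t + s) * q = (t - p * t * q) + (s - p * s * q) := by noncomm_ring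
        rw [this]; exact add_mem ha hc
      zero_mem' := by
        show (0 : H →L[ℂ] H) - p * 0 * q ∈ S
        simpa using zero_mem S
      algebraMap_mem' := by
        intro r
        show algebraMap ℂ (H →L[ℂ] H) r - p * algebraMap ℂ (H →L[ℂ] H) r * q ∈ S
        have : p * algebraMap ℂ (H →L[ℂ] H) r * q = r • (p * q) := by
          rw [Algebra.algebraMap_eq_smul_one]
          simp [mul_smul_comm, smul_mul_assoc]
        rw [this, hpq, smul_zero, sub_zero]
        exact algebraMap_mem S r }
  -- S ≤ T
  have hST : S ≤ T := by
    intro a ha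
    show a - p * a * q ∈ S
    exact sub_mem ha (mul_mem (mul_mem hpS ha) hqS)
  -- diagonal T = diagonal S
  have hdiag : diagonal T = diagonal S := by
    ext t
    constructor
    · rintro ⟨htT, htA⟩
      have ht' : t - p * t * q ∈ S := htT
      have hta' : ContinuousLinearMap.adjoint t - p * ContinuousLinearMap.adjoint t * q ∈ S :=
        htA
      -- q t p = 0 :
      have h4 : q * t * p = 0 := by
        have : q * t * p = q * (t - p * t * q) * p + (q * p) * t * (q * p) := by noncomm_ring
        rw [this, hqp]
        have h0 : q * (t - p * t * q) * p = 0 := by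
          have := hp3 _ ht'
          rw [mul_assoc, this, ← mul_assoc, ← mul_assoc, hqp, zero_mul, zero_mul]
        simp [h0]
      have h5 : q * ContinuousLinearMap.adjoint t * p = 0 := by
        have : q * ContinuousLinearMap.adjoint t * p
            = q * (ContinuousLinearMap.adjoint t - p * ContinuousLinearMap.adjoint t * q) * p
              + (q * p) * ContinuousLinearMap.adjoint t * (q * p) := by noncomm_ring
        rw [this, hqp]
        have h0 : q * (ContinuousLinearMap.adjoint t
            - p * ContinuousLinearMap.adjoint t * q) * p = 0 := by
          have := hp3 _ hta'
          rw [mul_assoc, this, ← mul_assoc, ← mul_assoc, hqp, zero_mul, zero_mul]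
        simp [h0]
      -- take adjoints: p t q = 0 and p t* q = 0
      have h6 : p * t * q = 0 := by
        have := congrArg star h5
        simpa [star_mul, hpstar, hqstar, ← ContinuousLinearMap.star_eq_adjoint,
          mul_assoc] using this
      have h7 : p * ContinuousLinearMap.adjoint t * q = 0 := by
        have := congrArg star h4
        simpa [star_mul, hpstar, hqstar, ← ContinuousLinearMap.star_eq_adjoint,
          mul_assoc] using this
      constructor
      · have := ht'; rwa [h6, sub_zero] at this
      · have := hta'; rwa [h7, sub_zero] at this
    · rintro ⟨htS, htA⟩
      exact ⟨hST htS, hST htA⟩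
  have hTtri : IsTriangular T := by
    unfold IsTriangular
    rw [hdiag]
    exact ⟨hcomm, hmax⟩
  have hSeq : S = T := hmaxT T hTtri hST
  have hmemT : p * b * (1 - p) ∈ T := by
    show p * b * q - p * (p * b * q) * q ∈ S
    have : p * (p * b * q) * q = p * b * q := by
      calc p * (p * b * q) * q = (p * p) * b * (q * q) := by noncomm_ring
      _ = p * b * q := by rw [hp1, hqq]
    rw [this, sub_self]
    exact zero_mem S
  rw [hSeq]
  exact hmemT
end

section
/- Let S be a maximal triangular subalgebra of B(H), let p ∈ lat(S), and let ξ be a nonzero vector with p ξ = 0. Then for every vector η in the range of p there exists a ∈ S with a ξ = η; that is, S ξ contains the range of p. -/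
set_option maxHeartbeats 1000000
set_option synthInstance.maxHeartbeats 400000

/-- If `S` is maximal triangular, `p ∈ lat(S)`, and `ξ ≠ 0` with `p ξ = 0`, then `S ξ`
contains the range of `p`: every `η` with `p η = η` is of the form `a ξ` for some `a ∈ S`. -/
theorem range_subset_orbit {H : Type*} [NormedAddCommGroup H] [InnerProductSpace ℂ H]
    [CompleteSpace H] {S : Subalgebra ℂ (H →L[ℂ] H)} (hS : IsMaxTriangular S)
    {p : H →L[ℂ] H} (hp : InLat S p) {ξ : H} (hξ : ξ ≠ 0) (hpξ : p ξ = 0)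
    (η : H) (hη : p η = η) :
    ∃ a ∈ S, a ξ = η := by
  obtain ⟨⟨hcomm, hmax⟩, hmaximal⟩ := hS
  obtain ⟨hpp, hpadj, hlat⟩ := hp
  -- p commutes with the diagonal, hence p ∈ diagonal S
  have hpd : p ∈ diagonal S := by
    apply hmax
    intro a ha
    have h1 : a * p = p * a * p := hlat a ha.1
    have h2 : ContinuousLinearMap.adjoint a * p
        = p * ContinuousLinearMap.adjoint a * p := hlat _ ha.2
    have h3 := congrArg ContinuousLinearMap.adjoint h2
    simp only [← ContinuousLinearMap.star_eq_adjoint, star_mul, star_star] at h3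
    rw [ContinuousLinearMap.star_eq_adjoint, hpadj] at h3
    have h4 : p * a = p * a * p := h3.trans (mul_assoc p a p).symm
    exact h1.trans h4.symm
  have hpS : p ∈ S := hpd.1
  -- basic identities
  have hq : (1 - p) * p = 0 := by rw [sub_mul, one_mul, hpp, sub_self]
  have hqq : (1 - p) * (1 - p) = (1 - p) := by
    rw [sub_mul, one_mul, mul_sub, mul_one, hpp, sub_self, sub_zero]
  have hsp : ∀ s ∈ S, (1 - p) * s * p = 0 := by
    intro s hs
    rw [sub_mul, one_mul, sub_mul, hlat s hs, sub_self]
  -- the corner submodule J = p B(H) (1-p)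
  set L : (H →L[ℂ] H) →ₗ[ℂ] (H →L[ℂ] H) :=
    (LinearMap.mulLeft ℂ p).comp (LinearMap.mulRight ℂ (1 - p)) with hL
  have hLapp : ∀ x, L x = p * x * (1 - p) := by
    intro x
    simp [hL, LinearMap.mulLeft_apply, LinearMap.mulRight_apply, mul_assoc]
  set M : Submodule ℂ (H →L[ℂ] H) := S.toSubmodule ⊔ LinearMap.range L with hM
  have hmemM : ∀ t, t ∈ M ↔ ∃ s ∈ S, ∃ x, s + (p * x * (1 - p)) = t := by
    intro t
    rw [hM, Submodule.mem_sup]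
    constructor
    · rintro ⟨s, hs, j, ⟨x, rfl⟩, hsum⟩
      exact ⟨s, hs, x, by rwa [hLapp] at hsum⟩
    · rintro ⟨s, hs, x, hsum⟩
      exact ⟨s, hs, L x, ⟨x, rfl⟩, by rwa [hLapp]⟩
  -- M is a subalgebra
  have honeM : (1 : H →L[ℂ] H) ∈ M := by
    rw [hmemM]; exact ⟨1, S.one_mem, 0, by simp⟩
  have hmulM : ∀ x y, x ∈ M → y ∈ M → x * y ∈ M := by
    intro x y hx hy
    rw [hmemM] at hx hy ⊢
    obtain ⟨s, hs, u, rfl⟩ := hx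
    obtain ⟨r, hr, v, rfl⟩ := hy
    refine ⟨s * r, S.mul_mem hs hr, s * p * v + u * (1 - p) * r, ?_⟩
    have e1 : s * (p * v * (1 - p)) = p * (s * p * v) * (1 - p) := by
      calc s * (p * v * (1 - p))
          = (s * p) * (v * (1 - p)) := by simp only [mul_assoc]
        _ = (p * s * p) * (v * (1 - p)) := by rw [hlat s hs]
        _ = p * (s * p * v) * (1 - p) := by simp only [mul_assoc]
    have h5 : ((1 - p) * r) * (1 - p) = (1 - p) * r := by
      rw [mul_sub, mul_one, hsp r hr, sub_zero]
    have e2 : (p * u * (1 - p)) * r = p * (u * (1 - p) * r) * (1 - p) := by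
      calc (p * u * (1 - p)) * r
          = p * (u * ((1 - p) * r)) := by simp only [mul_assoc]
        _ = p * (u * (((1 - p) * r) * (1 - p))) := by rw [h5]
        _ = p * (u * (1 - p) * r) * (1 - p) := by simp only [mul_assoc]
    have e3 : p * u * (1 - p) * (p * v * (1 - p)) = 0 := by
      calc p * u * (1 - p) * (p * v * (1 - p))
          = p * (u * (((1 - p) * p) * (v * (1 - p)))) := by simp only [mul_assoc]
        _ = 0 := by rw [hq, zero_mul, mul_zero, mul_zero]
    calc (s * r) + p * (s * p * v + u * (1 - p) * r) * (1 - p)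
        = s * r + (p * (s * p * v) * (1 - p) + p * (u * (1 - p) * r) * (1 - p)) := by
          rw [mul_add, add_mul]
      _ = s * r + (s * (p * v * (1 - p)) + (p * u * (1 - p)) * r) := by rw [← e1, ← e2]
      _ = (s + p * u * (1 - p)) * (r + p * v * (1 - p)) := by
          rw [add_mul, mul_add, mul_add, e3, add_zero, add_assoc]
  set T : Subalgebra ℂ (H →L[ℂ] H) := M.toSubalgebra honeM hmulM with hT
  have hST : S ≤ T := by
    intro s hs
    show s ∈ M
    rw [hmemM]
    exact ⟨s, hs, 0, by simp⟩
  -- key: members of T whose adjoint is in T lie in S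
  have hkey : ∀ t : H →L[ℂ] H, t ∈ T → ContinuousLinearMap.adjoint t ∈ T → t ∈ S := by
    intro t ht ht'
    have ht2 : t ∈ M := ht
    have ht2' : ContinuousLinearMap.adjoint t ∈ M := ht'
    rw [hmemM] at ht2 ht2'
    obtain ⟨s, hs, u, hu⟩ := ht2
    obtain ⟨r, hr, v, hv⟩ := ht2'
    -- (1-p) * (adjoint t) * p = 0
    have hz : (1 - p) * ContinuousLinearMap.adjoint t * p = 0 := by
      rw [← hv, mul_add, add_mul, hsp r hr]
      have hc : (1 - p) * (p * v * (1 - p)) * p = 0 := by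
        calc (1 - p) * (p * v * (1 - p)) * p
            = ((1 - p) * p) * (v * ((1 - p) * p)) := by simp only [mul_assoc]
          _ = 0 := by rw [hq, zero_mul]
      rw [hc, add_zero]
    -- hence p * t * (1 - p) = 0
    have hz' : p * t * (1 - p) = 0 := by
      have h8 := congrArg ContinuousLinearMap.adjoint hz
      simp only [← ContinuousLinearMap.star_eq_adjoint, star_mul, star_star, star_sub,
        star_one, star_zero] at h8
      rw [ContinuousLinearMap.star_eq_adjoint, hpadj] at h8
      rw [mul_assoc]
      exact h8
    -- compute the corner part from hz'
    have h9 : p * s * (1 - p) + p * (p * u * (1 - p)) * (1 - p) = 0 := by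
      have h10 : p * (s + p * u * (1 - p)) * (1 - p) = 0 := by rw [hu]; exact hz'
      rw [mul_add, add_mul] at h10
      exact h10
    have h6 : p * (p * u * (1 - p)) * (1 - p) = p * u * (1 - p) := by
      calc p * (p * u * (1 - p)) * (1 - p)
          = (p * p) * (u * ((1 - p) * (1 - p))) := by simp only [mul_assoc]
        _ = p * u * (1 - p) := by rw [hpp, hqq]; simp only [mul_assoc]
    rw [h6] at h9
    have hjval : p * u * (1 - p) = -(p * s * (1 - p)) :=
      eq_neg_of_add_eq_zero_left (by rw [add_comm]; exact h9)
    rw [← hu, hjval]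
    have hmem : p * s * (1 - p) ∈ S :=
      S.mul_mem (S.mul_mem hpS hs) (S.sub_mem S.one_mem hpS)
    exact S.add_mem hs (S.neg_mem hmem)
  -- diagonal T = diagonal S
  have hdiag : diagonal T = diagonal S := by
    apply Set.Subset.antisymm
    · rintro t ⟨h1, h2⟩
      refine ⟨hkey t h1 h2, hkey (ContinuousLinearMap.adjoint t) h2 ?_⟩
      rwa [ContinuousLinearMap.adjoint_adjoint]
    · rintro t ⟨h1, h2⟩
      exact ⟨hST h1, hST h2⟩
  have hTtri : IsTriangular T := by
    unfold IsTriangular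
    rw [hdiag]
    exact ⟨hcomm, hmax⟩
  have hSeqT : S = T := hmaximal T hTtri hST
  -- the rank one operator
  set b : H →L[ℂ] H := (innerSL ℂ ξ).smulRight η with hb
  have hbT : b ∈ T := by
    show b ∈ M
    rw [hmemM]
    refine ⟨0, S.zero_mem, b, ?_⟩
    rw [zero_add]
    ext x
    simp only [hb, ContinuousLinearMap.mul_apply, ContinuousLinearMap.smulRight_apply,
      innerSL_apply_apply, ContinuousLinearMap.sub_apply, ContinuousLinearMap.one_apply]
    have hip : inner ℂ ξ (p x) = (0 : ℂ) := by
      rw [← ContinuousLinearMap.adjoint_inner_left, hpadj, hpξ, inner_zero_left]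
    rw [inner_sub_right, hip, sub_zero, map_smul, hη]
  have hbS : b ∈ S := hSeqT ▸ hbT
  refine ⟨(inner ℂ ξ ξ : ℂ)⁻¹ • b, S.smul_mem hbS _, ?_⟩
  have hnz : (inner ℂ ξ ξ : ℂ) ≠ 0 := inner_self_ne_zero.mpr hξ
  simp only [ContinuousLinearMap.smul_apply, hb, ContinuousLinearMap.smulRight_apply,
    innerSL_apply_apply]
  rw [smul_smul, inv_mul_cancel₀ hnz, one_smul]
end

section
/- Let S be a maximal triangular subalgebra of B(H). Then lat(S) is totally ordered: for any p, q ∈ lat(S), either p ≤ q or q ≤ p (equivalently, either pq = p or pq = q). -/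
set_option maxHeartbeats 1000000
set_option synthInstance.maxHeartbeats 400000

section AuxRankOne

set_option linter.unusedSectionVars false

open ContinuousLinearMap

variable {H : Type*} [NormedAddCommGroup H] [InnerProductSpace ℂ H] [CompleteSpace H]

/-- The rank one operator `v ↦ ⟪η, v⟫ • ξ`. -/
noncomputable def rkOne (ξ η : H) : H →L[ℂ] H := (innerSL ℂ η).smulRight ξ

lemma rkOne_apply (ξ η v : H) : rkOne ξ η v = (inner ℂ η v : ℂ) • ξ := rfl

lemma mul_rkOne (a : H →L[ℂ] H) (ξ η : H) : a * rkOne ξ η = rkOne (a ξ) η := by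
  ext v; simp [rkOne_apply, ContinuousLinearMap.mul_apply]

lemma rkOne_mul (a : H →L[ℂ] H) (ξ η : H) : rkOne ξ η * a = rkOne ξ (adjoint a η) := by
  ext v; simp [rkOne_apply, ContinuousLinearMap.mul_apply, adjoint_inner_left]

lemma rkOne_rkOne (α β γ δ : H) : rkOne α β * rkOne γ δ = (inner ℂ β γ : ℂ) • rkOne α δ := by
  ext v
  simp only [rkOne_apply, ContinuousLinearMap.mul_apply, ContinuousLinearMap.smul_apply,
    inner_smul_right, smul_smul]
  ring_nf

lemma rkOne_zero_left (η : H) : rkOne 0 η = 0 := by ext v; simp [rkOne_apply]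

lemma rkOne_zero_right (ξ : H) : rkOne ξ 0 = 0 := by ext v; simp [rkOne_apply]

/-- Any element of `lat S` belongs to the diagonal, provided the diagonal is
maximal abelian. -/
lemma inLat_mem_diagonal {S : Subalgebra ℂ (H →L[ℂ] H)} (hD : IsMaxAbelian (diagonal S))
    {r : H →L[ℂ] H} (hr : InLat S r) : r ∈ diagonal S := by
  apply hD.2
  rintro a ⟨haS, haA⟩
  have hrstar : star r = r := by rw [star_eq_adjoint, hr.2.1]
  have h1 : a * r = r * a * r := hr.2.2 a haS
  have h2 : adjoint a * r = r * adjoint a * r := hr.2.2 (adjoint a) haA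
  rw [← star_eq_adjoint] at h2
  have h2' := congrArg star h2
  simp only [star_mul, star_star, hrstar, mul_assoc] at h2'
  -- h2' : r * a = r * (a * r)
  rw [h1, mul_assoc, ← h2']

end AuxRankOne

/-- If `S` is maximal triangular then `lat(S)` is totally ordered: for `p, q ∈ lat(S)`
either `p q = p` (i.e. `p ≤ q`) or `p q = q` (i.e. `q ≤ p`). -/
theorem lat_totallyOrdered {H : Type*} [NormedAddCommGroup H] [InnerProductSpace ℂ H]
    [CompleteSpace H] {S : Subalgebra ℂ (H →L[ℂ] H)} (hS : IsMaxTriangular S)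
    {p q : H →L[ℂ] H} (hp : InLat S p) (hq : InLat S q) :
    p * q = p ∨ p * q = q := by
  classical
  open ContinuousLinearMap in
  obtain ⟨⟨hDcomm, hDmax⟩, hSmax⟩ := hS
  have hpD : p ∈ diagonal S := inLat_mem_diagonal ⟨hDcomm, hDmax⟩ hp
  have hqD : q ∈ diagonal S := inLat_mem_diagonal ⟨hDcomm, hDmax⟩ hq
  have hcomm : p * q = q * p := hDcomm p hpD q hqD
  have hpp : p * p = p := hp.1
  have hqq : q * q = q := hq.1
  have hpadj : adjoint p = p := hp.2.1
  have hqadj : adjoint q = q := hq.2.1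
  by_cases hegoal : p * q = p
  · exact Or.inl hegoal
  by_cases hfgoal : p * q = q
  · exact Or.inr hfgoal
  exfalso
  set e : H →L[ℂ] H := p - p * q with he_def
  set f : H →L[ℂ] H := q - p * q with hf_def
  have hpe : p * e = e := by
    rw [he_def, mul_sub, hpp, ← mul_assoc, hpp]
  have hqe : q * e = 0 := by
    rw [he_def, mul_sub, ← hcomm, ← mul_assoc, ← hcomm, mul_assoc, hqq, sub_self]
  have hqf : q * f = f := by
    rw [hf_def, mul_sub, hqq, ← mul_assoc, ← hcomm, mul_assoc, hqq]
  have hpf : p * f = 0 := by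
    rw [hf_def, mul_sub, ← mul_assoc, hpp, sub_self]
  have hfp : f * p = 0 := by
    rw [hf_def, sub_mul, mul_assoc, ← hcomm, ← mul_assoc, hpp, hcomm, sub_self]
  have hfadj : adjoint f = f := by
    rw [← star_eq_adjoint, hf_def, star_sub, star_mul, star_eq_adjoint, star_eq_adjoint,
      hpadj, hqadj, ← hcomm]
  -- vectors
  obtain ⟨ζ, hζ⟩ : ∃ v, e v ≠ 0 := by
    by_contra h
    push_neg at h
    exact hegoal (sub_eq_zero.mp (ContinuousLinearMap.ext h)).symm
  obtain ⟨ζ', hζ'⟩ : ∃ v, f v ≠ 0 := by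
    by_contra h
    push_neg at h
    exact hfgoal (sub_eq_zero.mp (ContinuousLinearMap.ext h)).symm
  set ξ : H := e ζ with hξ_def
  set η : H := f ζ' with hη_def
  have hpξ : p ξ = ξ := by
    rw [hξ_def, ← ContinuousLinearMap.mul_apply, hpe]
  have hqξ : q ξ = 0 := by
    rw [hξ_def, ← ContinuousLinearMap.mul_apply, hqe]; rfl
  have hqη : q η = η := by
    rw [hη_def, ← ContinuousLinearMap.mul_apply, hqf]
  have hpη : p η = 0 := by
    rw [hη_def, ← ContinuousLinearMap.mul_apply, hpf]; rfl
  set x : H →L[ℂ] H := rkOne ξ η with hx_def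
  -- invariant vector facts for members of S
  have hpsξ : ∀ s ∈ S, p (s ξ) = s ξ := by
    intro s hs
    have h := ContinuousLinearMap.ext_iff.mp (hp.2.2 s hs) ξ
    simp only [ContinuousLinearMap.mul_apply, hpξ] at h
    exact h.symm
  have hpstar : star p = p := by rw [star_eq_adjoint, hpadj]
  have hptη : ∀ t ∈ S, p (adjoint t η) = 0 := by
    intro t ht
    have h := congrArg star (hp.2.2 t ht)
    simp only [star_mul, hpstar] at h
    have h2 := ContinuousLinearMap.ext_iff.mp h η
    simp only [ContinuousLinearMap.mul_apply, hpη, map_zero] at h2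
    rw [← star_eq_adjoint]
    exact h2
  -- the scalar fact : ⟪η, a ξ⟫ = 0 for a ∈ S
  have hfae : ∀ a ∈ S, f * (a * e) = 0 := by
    intro a ha
    have h1 : a * p = p * a * p := hp.2.2 a ha
    have key : f * (a * e) = f * (p * a * p) - f * (p * a * p * q) := by
      rw [he_def, mul_sub a p (p * q), ← mul_assoc a p q, h1, mul_sub f]
    rw [key]
    simp only [← mul_assoc, hfp, zero_mul, sub_self]
  have hinner : ∀ a ∈ S, (inner ℂ η (a ξ) : ℂ) = 0 := by
    intro a ha
    have hw : f (a ξ) = 0 := by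
      have h := ContinuousLinearMap.ext_iff.mp (hfae a ha) ζ
      simp only [ContinuousLinearMap.mul_apply, ContinuousLinearMap.zero_apply] at h
      exact h
    calc (inner ℂ η (a ξ) : ℂ) = inner ℂ ((adjoint f) ζ') (a ξ) := by rw [hη_def, hfadj]
      _ = inner ℂ ζ' (f (a ξ)) := by rw [adjoint_inner_left]
      _ = 0 := by rw [hw, inner_zero_right]
  have hxax : ∀ a ∈ S, x * a * x = 0 := by
    intro a ha
    rw [hx_def, rkOne_mul, rkOne_rkOne]
    rw [adjoint_inner_left]
    rw [hinner a ha, zero_smul]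
  -- the span J
  set Gen : Set (H →L[ℂ] H) := {y | ∃ s ∈ S, ∃ t ∈ S, y = s * x * t} with hGen_def
  set J : Submodule ℂ (H →L[ℂ] H) := Submodule.span ℂ Gen with hJ_def
  have hgen_eq : ∀ s ∈ S, ∀ t ∈ S, s * x * t = rkOne (s ξ) (adjoint t η) := by
    intro s hs t ht
    rw [hx_def, mul_rkOne, rkOne_mul]
  have hxJ : x ∈ J := by
    apply Submodule.subset_span
    exact ⟨1, one_mem S, 1, one_mem S, by rw [mul_one, one_mul]⟩
  -- p * j = j and j * p = 0 for j ∈ J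
  have hJp : ∀ j ∈ J, p * j = j ∧ j * p = 0 := by
    intro j hj
    induction hj using Submodule.span_induction with
    | mem y hy =>
      obtain ⟨s, hs, t, ht, rfl⟩ := hy
      rw [hgen_eq s hs t ht]
      constructor
      · rw [mul_rkOne, hpsξ s hs]
      · rw [rkOne_mul, hpadj, hptη t ht, rkOne_zero_right]
    | zero => exact ⟨mul_zero p, zero_mul p⟩
    | add y z hy hz h1 h2 =>
      exact ⟨by rw [mul_add, h1.1, h2.1], by rw [add_mul, h1.2, h2.2, add_zero]⟩
    | smul c y hy h1 =>
      exact ⟨by rw [mul_smul_comm, h1.1], by rw [smul_mul_assoc, h1.2, smul_zero]⟩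
  -- J is a left and right S-module
  have hSmulJ : ∀ s ∈ S, ∀ j ∈ J, s * j ∈ J := by
    intro s hs j hj
    induction hj using Submodule.span_induction with
    | mem y hy =>
      obtain ⟨s', hs', t, ht, rfl⟩ := hy
      apply Submodule.subset_span
      exact ⟨s * s', mul_mem hs hs', t, ht, by rw [← mul_assoc, ← mul_assoc]⟩
    | zero => rw [mul_zero]; exact J.zero_mem
    | add y z hy hz h1 h2 => rw [mul_add]; exact J.add_mem h1 h2
    | smul c y hy h1 => rw [mul_smul_comm]; exact J.smul_mem c h1
  have hJmulS : ∀ j ∈ J, ∀ t ∈ S, j * t ∈ J := by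
    intro j hj t ht
    induction hj using Submodule.span_induction with
    | mem y hy =>
      obtain ⟨s', hs', t', ht', rfl⟩ := hy
      apply Submodule.subset_span
      exact ⟨s', hs', t' * t, mul_mem ht' ht, by rw [mul_assoc (s' * x)]⟩
    | zero => rw [zero_mul]; exact J.zero_mem
    | add y z hy hz h1 h2 => rw [add_mul]; exact J.add_mem h1 h2
    | smul c y hy h1 => rw [smul_mul_assoc]; exact J.smul_mem c h1
  -- J * J = 0
  have hJJgen : ∀ y ∈ Gen, ∀ z ∈ Gen, y * z = 0 := by
    rintro y ⟨s, hs, t, ht, rfl⟩ z ⟨s', hs', t', ht', rfl⟩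
    have hassoc : s * x * t * (s' * x * t') = s * (x * (t * s') * x) * t' := by
      noncomm_ring
    rw [hassoc, hxax (t * s') (mul_mem ht hs'), mul_zero, zero_mul]
  have hJJ : ∀ j ∈ J, ∀ k ∈ J, j * k = 0 := by
    have hgenJ : ∀ y ∈ Gen, ∀ k ∈ J, y * k = 0 := by
      intro y hy k hk
      induction hk using Submodule.span_induction with
      | mem z hz => exact hJJgen y hy z hz
      | zero => exact mul_zero y
      | add z w hz hw h1 h2 => rw [mul_add, h1, h2, add_zero]
      | smul c z hz h1 => rw [mul_smul_comm, h1, smul_zero]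
    intro j hj
    induction hj using Submodule.span_induction with
    | mem y hy => exact fun k hk => hgenJ y hy k hk
    | zero => exact fun k _ => zero_mul k
    | add y z hy hz h1 h2 => exact fun k hk => by rw [add_mul, h1 k hk, h2 k hk, add_zero]
    | smul c y hy h1 => exact fun k hk => by rw [smul_mul_assoc, h1 k hk, smul_zero]
  -- the bigger algebra T
  set T : Subalgebra ℂ (H →L[ℂ] H) := Algebra.adjoin ℂ ((S : Set (H →L[ℂ] H)) ∪ {x})
    with hT_def
  have hSsubT : ∀ a ∈ S, a ∈ T := fun a ha => Algebra.subset_adjoin (Or.inl ha)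
  have hxT : x ∈ T := Algebra.subset_adjoin (Or.inr rfl)
  have hdecomp : ∀ a ∈ T, ∃ s ∈ S, ∃ j ∈ J, a = s + j := by
    intro a ha
    induction ha using Algebra.adjoin_induction with
    | mem y hy =>
      rcases hy with hy | hy
      · exact ⟨y, hy, 0, J.zero_mem, (add_zero y).symm⟩
      · rw [Set.mem_singleton_iff] at hy
        subst hy
        exact ⟨0, zero_mem S, x, hxJ, (zero_add x).symm⟩
    | algebraMap r =>
      exact ⟨algebraMap ℂ _ r, S.algebraMap_mem r, 0, J.zero_mem, (add_zero _).symm⟩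
    | add y z hy hz h1 h2 =>
      obtain ⟨s, hs, j, hj, rfl⟩ := h1
      obtain ⟨s', hs', j', hj', rfl⟩ := h2
      exact ⟨s + s', add_mem hs hs', j + j', J.add_mem hj hj', by abel⟩
    | mul y z hy hz h1 h2 =>
      obtain ⟨s, hs, j, hj, rfl⟩ := h1
      obtain ⟨s', hs', j', hj', rfl⟩ := h2
      refine ⟨s * s', mul_mem hs hs', s * j' + j * s', J.add_mem (hSmulJ s hs j' hj')
        (hJmulS j hj s' hs'), ?_⟩
      have hexp : (s + j) * (s' + j') = s * s' + (s * j' + j * s') + j * j' := by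
        noncomm_ring
      rw [hexp, hJJ j hj j' hj', add_zero]
  -- the key step: T ∩ T* ⊆ S
  have hTS : ∀ a ∈ T, adjoint a ∈ T → a ∈ S := by
    intro a haT hadT
    obtain ⟨s, hs, j, hj, rfl⟩ := hdecomp a haT
    obtain ⟨t, ht, k, hk, hstarEq⟩ := hdecomp _ hadT
    obtain ⟨hpj, hjp⟩ := hJp j hj
    obtain ⟨hpk, hkp⟩ := hJp k hk
    -- translate to star
    rw [← star_eq_adjoint, star_add] at hstarEq
    have hjstar_p : star j * p = star j := by
      have := congrArg star hpj
      rwa [star_mul, star_eq_adjoint p, hpadj] at this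
    have hp_jstar : p * star j = 0 := by
      have := congrArg star hjp
      rwa [star_mul, star_eq_adjoint p, hpadj, star_zero] at this
    -- multiply hstarEq by p on the right
    have hR := congrArg (fun z => z * p) hstarEq
    simp only [add_mul, hjstar_p] at hR
    -- hR : star s * p + star j = t * p + k * p
    rw [hkp, add_zero] at hR
    -- multiply hR by p on the left
    have hL := congrArg (fun z => p * z) hR
    simp only [mul_add, hp_jstar, add_zero, ← mul_assoc] at hL
    -- hL : p * star s * p = p * (t * p)
    have htp : t * p = p * t * p := hp.2.2 t ht
    have hLL : p * star s * p = t * p := by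
      rw [hL, ← htp]
    -- solve for star j
    have hjeq : star j = p * star s * p - star s * p := by
      rw [hLL]
      exact eq_sub_of_add_eq' hR
    have hjeq' : j = p * (s * p) - p * s := by
      have h := congrArg star hjeq
      rw [star_star] at h
      rw [h]
      simp only [star_sub, star_mul, star_star, hpstar]
    have hjS : j ∈ S := by
      rw [hjeq']
      exact sub_mem (mul_mem hpD.1 (mul_mem hs hpD.1)) (mul_mem hpD.1 hs)
    exact add_mem hs hjS
  -- T is triangular with the same diagonal
  have hdiagT : diagonal T = diagonal S := by
    ext a
    constructor
    · rintro ⟨haT, hadT⟩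
      refine ⟨hTS a haT hadT, hTS (adjoint a) hadT ?_⟩
      rwa [adjoint_adjoint]
    · rintro ⟨h1, h2⟩
      exact ⟨hSsubT a h1, hSsubT _ h2⟩
  have hTtri : IsTriangular T := by
    unfold IsTriangular
    rw [hdiagT]
    exact ⟨hDcomm, hDmax⟩
  have hSeqT : S = T := hSmax T hTtri (fun a ha => hSsubT a ha)
  have hxS : x ∈ S := by rw [hSeqT]; exact hxT
  -- contradiction: x q = x yet q x q = 0 while x ≠ 0
  have h1 : x * q = q * x * q := hq.2.2 x hxS
  have hxq : x * q = x := by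
    rw [hx_def, rkOne_mul, hqadj, hqη]
  have hqx : q * x = 0 := by
    rw [hx_def, mul_rkOne, hqξ, rkOne_zero_left]
  have hx0 : x = 0 := by
    rw [← hxq, h1, hqx, zero_mul]
  have hη0 : η ≠ 0 := hζ'
  have hξ0 : ξ ≠ 0 := hζ
  have : x η ≠ 0 := by
    rw [hx_def, rkOne_apply]
    exact smul_ne_zero (inner_self_ne_zero.mpr hη0) hξ0
  exact this (by rw [hx0]; rfl)
end

section
/- Let S be a maximal triangular subalgebra of B(H). Then the commutant of S is trivial: every b ∈ B(H) satisfying b a = a b for all a ∈ S is a complex scalar multiple of the identity operator. -/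
set_option maxHeartbeats 1000000
set_option synthInstance.maxHeartbeats 400000

open NormedSpace in
lemma fuglede_aux {A : Type*} [CStarAlgebra A] {a n : A} (hn : Commute n (star n))
    (h : Commute a n) : Commute a (star n) := by
  rcases subsingleton_or_nontrivial A with hA | hA
  · exact Subsingleton.elim _ _
  let +nondep : NormedAlgebra ℚ A := .restrictScalars ℚ ℂ A
  -- the entire function
  set f : ℂ → A := fun z => exp (z • star n) * a * exp (-(z • star n)) with hf
  have hmain : ∀ z : ℂ, f z =
      exp (z • star n - (starRingEnd ℂ z) • n) * a *
        exp (-(z • star n - (starRingEnd ℂ z) • n)) := by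
    intro z
    set ζ : ℂ := starRingEnd ℂ z
    set w : A := z • star n - ζ • n with hw
    have hcw : Commute w (ζ • n) :=
      ((hn.symm.smul_left z).smul_right ζ).sub_left (((Commute.refl n).smul_left ζ).smul_right ζ)
    have e1 : exp (z • star n) = exp w * exp (ζ • n) := by
      rw [← exp_add_of_commute hcw, hw, sub_add_cancel]
    have e2 : exp (-(z • star n)) = exp (-(ζ • n)) * exp (-w) := by
      rw [← exp_add_of_commute (hcw.symm.neg_left.neg_right)]
      congr 1
      rw [hw]; abel
    have e3 : exp (ζ • n) * a = a * exp (ζ • n) := ((h.smul_right ζ).exp_right).eq.symm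
    have e4 : exp (ζ • n) * exp (-(ζ • n)) = 1 := by
      rw [← exp_add_of_commute ((Commute.refl (ζ • n)).neg_right), add_neg_cancel, exp_zero]
    calc f z = exp (z • star n) * a * exp (-(z • star n)) := rfl
      _ = exp w * (exp (ζ • n) * a) * (exp (-(ζ • n)) * exp (-w)) := by
            rw [e1, e2]; noncomm_ring
      _ = exp w * a * ((exp (ζ • n) * exp (-(ζ • n))) * exp (-w)) := by
            rw [e3]; noncomm_ring
      _ = exp w * a * exp (-w) := by rw [e4, one_mul]
  have hskew : ∀ z : ℂ, star (z • star n - (starRingEnd ℂ z) • n)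
      = -(z • star n - (starRingEnd ℂ z) • n) := by
    intro z
    simp [star_smul, star_sub]
    try abel
  have hnorm_exp : ∀ w : A, star w = -w → ‖exp w‖ ≤ 1 := by
    intro w hw
    have h1 : star (exp w) * exp w = 1 := by
      rw [star_exp, hw, ← exp_add_of_commute ((Commute.refl w).neg_left), neg_add_cancel, exp_zero]
    have h2 : ‖exp w‖ * ‖exp w‖ = 1 := by
      rw [← CStarRing.norm_star_mul_self, h1, norm_one]
    nlinarith [norm_nonneg (exp w)]
  have hbdd : ∀ z : ℂ, ‖f z‖ ≤ ‖a‖ := by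
    intro z
    rw [hmain z]
    set w : A := z • star n - (starRingEnd ℂ z) • n
    have h1 := hnorm_exp w (hskew z)
    have h2 : ‖exp (-w)‖ ≤ 1 := by
      refine hnorm_exp (-w) ?_
      rw [star_neg, hskew z, neg_neg]
    calc ‖exp w * a * exp (-w)‖ ≤ ‖exp w * a‖ * ‖exp (-w)‖ := norm_mul_le _ _
      _ ≤ ‖exp w‖ * ‖a‖ * ‖exp (-w)‖ := by
          gcongr
          exact norm_mul_le _ _
      _ ≤ 1 * ‖a‖ * 1 := by gcongr
      _ = ‖a‖ := by ring
  have hdiff : Differentiable ℂ f := by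
    have d1 : Differentiable ℂ (fun z : ℂ => exp (z • star n)) :=
      fun z => (hasDerivAt_exp_smul_const (𝕂 := ℂ) (star n) z).differentiableAt
    have d2 : Differentiable ℂ (fun z : ℂ => exp (-(z • star n))) := by
      have : (fun z : ℂ => exp (-(z • star n))) = fun z : ℂ => exp (z • (-star n)) := by
        funext z; rw [smul_neg]
      rw [this]
      exact fun z => (hasDerivAt_exp_smul_const (𝕂 := ℂ) (-star n) z).differentiableAt
    exact (d1.mul (differentiable_const a)).mul d2
  have hconst : ∀ z : ℂ, f z = f 0 := by
    intro z
    refine hdiff.apply_eq_apply_of_bounded ?_ z 0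
    refine isBounded_iff_forall_norm_le.2 ⟨‖a‖, ?_⟩
    rintro x ⟨z, rfl⟩
    exact hbdd z
  have hf0 : f 0 = a := by
    simp [hf, zero_smul, exp_zero]
  have key : ∀ z : ℂ, exp (z • star n) * a = a * exp (z • star n) := by
    intro z
    have h1 : f z = a := (hconst z).trans hf0
    have h2 : exp (-(z • star n)) * exp (z • star n) = 1 := by
      rw [← exp_add_of_commute ((Commute.refl (z • star n)).neg_left), neg_add_cancel, exp_zero]
    calc exp (z • star n) * a
        = exp (z • star n) * a * (exp (-(z • star n)) * exp (z • star n)) := by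
          rw [h2, mul_one]
      _ = f z * exp (z • star n) := by rw [hf]; noncomm_ring
      _ = a * exp (z • star n) := by rw [h1]
  have hg1 : HasDerivAt (fun z : ℂ => exp (z • star n) * a)
      (star n * exp ((0 : ℂ) • star n) * a) 0 :=
    (hasDerivAt_exp_smul_const' (𝕂 := ℂ) (star n) 0).mul_const a
  have hg2 : HasDerivAt (fun z : ℂ => a * exp (z • star n))
      (a * (exp ((0 : ℂ) • star n) * star n)) 0 :=
    (hasDerivAt_exp_smul_const (𝕂 := ℂ) (star n) 0).const_mul a
  have heq : (fun z : ℂ => exp (z • star n) * a) = fun z : ℂ => a * exp (z • star n) :=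
    funext key
  rw [heq] at hg1
  have := hg1.unique hg2
  simp only [zero_smul, exp_zero, mul_one, one_mul] at this
  exact (Commute.symm this)

lemma cfc_mem_elemental' {A : Type*} [CStarAlgebra A] (c : A) (g : ℂ → ℂ) :
    cfc g c ∈ StarAlgebra.elemental ℂ c := by
  refine cfc_cases (· ∈ StarAlgebra.elemental ℂ c) c g (zero_mem _) fun hg hc ↦ ?_
  rw [cfcHom_eq_of_isStarNormal]
  exact SetLike.coe_mem _

lemma commute_cfc {A : Type*} [CStarAlgebra A] {c t : A} (hc : IsSelfAdjoint c)
    (h : Commute t c) (f : ℝ → ℝ) : Commute t (cfc f c) := by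
  have h1 : cfc f c ∈ StarAlgebra.elemental ℂ c := by
    rw [cfc_real_eq_complex f hc]
    exact cfc_mem_elemental' c _
  refine StarAlgebra.elemental.induction_on (R := ℂ) (P := fun u _ => Commute t u) h1 h ?_ ?_ ?_ ?_ ?_
  · show Commute t (star c)
    rwa [hc.star_eq]
  · exact fun r => (Algebra.commutes r t).symm
  · exact fun u _ v _ hpu hpv => hpu.add_right hpv
  · exact fun u _ v _ hpu hpv => hpu.mul_right hpv
  · intro s hs hps v hv
    have hcl : IsClosed {x : A | t * x = x * t} :=
      isClosed_eq (continuous_const.mul continuous_id) (continuous_id.mul continuous_const)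
    exact closure_minimal (fun u hu => hps u hu) hcl hv

section Corner

variable {A : Type*} [Ring A]

lemma aux0 {e s : A} (he : e * e = e) (hs : e * s = s * e) : (1 - e) * s * e = 0 := by
  have h1 : (1 - e) * s * e = s * e - e * (s * e) := by noncomm_ring
  rw [h1, ← mul_assoc, hs, mul_assoc, he, sub_self]

lemma aux_corner {e x y : A} (he : e * e = e)
    (hex : e * (x - (1 - e) * x * e) = (x - (1 - e) * x * e) * e)
    (hey : e * (y - (1 - e) * y * e) = (y - (1 - e) * y * e) * e) :
    x * y - (1 - e) * (x * y) * e =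
      (x - (1 - e) * x * e) * (y - (1 - e) * y * e) := by
  set sx := x - (1 - e) * x * e with hsx
  set sy := y - (1 - e) * y * e with hsy
  set cx := (1 - e) * x * e with hcx
  set cy := (1 - e) * y * e with hcy
  have hxeq : x = sx + cx := by rw [hsx]; abel
  have hyeq : y = sy + cy := by rw [hsy]; abel
  have hecx : e * cx = 0 := by
    have : e * cx = (e * (1 - e)) * x * e := by rw [hcx]; noncomm_ring
    rw [this]
    have he2 : e * (1 - e) = 0 := by rw [mul_sub, mul_one, he, sub_self]
    rw [he2, zero_mul, zero_mul]
  have hecy : e * cy = 0 := by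
    have : e * cy = (e * (1 - e)) * y * e := by rw [hcy]; noncomm_ring
    rw [this]
    have he2 : e * (1 - e) = 0 := by rw [mul_sub, mul_one, he, sub_self]
    rw [he2, zero_mul, zero_mul]
  have hcxe : cx * e = cx := by rw [hcx, mul_assoc ((1 - e) * x) e e, he]
  have hcye : cy * e = cy := by rw [hcy, mul_assoc ((1 - e) * y) e e, he]
  have hcc : cx * cy = 0 := by rw [← hcxe, mul_assoc, hecy, mul_zero]
  have hexy : e * (sx * sy) = (sx * sy) * e := by
    rw [← mul_assoc, hex, mul_assoc, hey, ← mul_assoc]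
  have h1 : (1 - e) * (sx * sy) * e = 0 := aux0 he hexy
  have h2 : (1 - e) * (sx * cy) * e = sx * cy := by
    have e1 : (sx * cy) * e = sx * cy := by rw [mul_assoc, hcye]
    have e2 : (1 - e) * (sx * cy) = sx * cy := by
      have : (1 - e) * (sx * cy) = sx * cy - (e * sx) * cy := by noncomm_ring
      rw [this, hex, mul_assoc, hecy, mul_zero, sub_zero]
    rw [mul_assoc, e1, e2]
  have h3 : (1 - e) * (cx * sy) * e = cx * sy := by
    have e1 : (1 - e) * (cx * sy) = cx * sy := by
      have : (1 - e) * (cx * sy) = cx * sy - (e * cx) * sy := by noncomm_ring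
      rw [this, hecx, zero_mul, sub_zero]
    have e2 : (cx * sy) * e = cx * sy := by
      rw [mul_assoc, ← hey, ← mul_assoc, hcxe]
    rw [e1]
    exact e2
  have expand : x * y = sx * sy + sx * cy + cx * sy + cx * cy := by
    rw [hxeq, hyeq]; noncomm_ring
  rw [expand, hcc, add_zero]
  have expand2 : (1 - e) * (sx * sy + sx * cy + cx * sy) * e =
      (1 - e) * (sx * sy) * e + (1 - e) * (sx * cy) * e + (1 - e) * (cx * sy) * e := by
    noncomm_ring
  rw [expand2, h1, h2, h3]
  abel

end Corner

open ContinuousLinearMap in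
lemma proj_trivial {H : Type*} [NormedAddCommGroup H] [InnerProductSpace ℂ H]
    [CompleteSpace H] {S : Subalgebra ℂ (H →L[ℂ] H)} (hS : IsMaxTriangular S)
    (e : H →L[ℂ] H) (he_sa : IsSelfAdjoint e) (he_idem : e * e = e)
    (he_comm : ∀ a ∈ S, e * a = a * e) : e = 0 ∨ e = 1 := by
  -- a general fact: the corner construction for an idempotent commuting with S
  have main : ∀ e : H →L[ℂ] H, IsSelfAdjoint e → e * e = e → (∀ a ∈ S, e * a = a * e) →
      ∀ X : H →L[ℂ] H, (1 - e) * X * e ∈ S := by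
    clear he_sa he_idem he_comm e
    intro e he_sa he_idem he_comm X
    set T : Subalgebra ℂ (H →L[ℂ] H) :=
      { carrier := {t | t - (1 - e) * t * e ∈ S}
        mul_mem' := by
          intro x y hx hy
          have hx' : x - (1 - e) * x * e ∈ S := hx
          have hy' : y - (1 - e) * y * e ∈ S := hy
          have key := aux_corner he_idem (he_comm _ hx') (he_comm _ hy')
          show x * y - (1 - e) * (x * y) * e ∈ S
          rw [key]
          exact mul_mem hx' hy'
        one_mem' := by
          show (1 : H →L[ℂ] H) - (1 - e) * 1 * e ∈ S
          have : (1 : H →L[ℂ] H) - (1 - e) * 1 * e = 1 - (e - e * e) := by noncomm_ring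
          rw [this, he_idem, sub_self, sub_zero]
          exact one_mem S
        add_mem' := by
          intro x y hx hy
          have hx' : x - (1 - e) * x * e ∈ S := hx
          have hy' : y - (1 - e) * y * e ∈ S := hy
          show (x + y) - (1 - e) * (x + y) * e ∈ S
          have : (x + y) - (1 - e) * (x + y) * e =
              (x - (1 - e) * x * e) + (y - (1 - e) * y * e) := by noncomm_ring
          rw [this]
          exact add_mem hx' hy'
        zero_mem' := by
          show (0 : H →L[ℂ] H) - (1 - e) * 0 * e ∈ S
          simp [zero_mem S]
        algebraMap_mem' := by
          intro r
          show algebraMap ℂ (H →L[ℂ] H) r - (1 - e) * algebraMap ℂ (H →L[ℂ] H) r * e ∈ S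
          have h0 : (1 - e) * e = 0 := by rw [sub_mul, one_mul, he_idem, sub_self]
          have : (1 - e) * algebraMap ℂ (H →L[ℂ] H) r * e
              = algebraMap ℂ (H →L[ℂ] H) r * ((1 - e) * e) := by
            rw [show (1 - e) * algebraMap ℂ (H →L[ℂ] H) r
                = algebraMap ℂ (H →L[ℂ] H) r * (1 - e) from (Algebra.commutes r _).symm,
              mul_assoc]
          rw [this, h0, mul_zero, sub_zero]
          exact algebraMap_mem S r } with hT
    have hST : S ≤ T := by
      intro s hs
      show s - (1 - e) * s * e ∈ S
      rw [aux0 he_idem (he_comm s hs), sub_zero]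
      exact hs
    -- T is triangular because diagonal T = diagonal S
    have hdiag : diagonal T = diagonal S := by
      ext t
      constructor
      · rintro ⟨ht, hta⟩
        -- ht : t ∈ T, hta : adjoint t ∈ T
        have hsa_e : adjoint e = e := by
          rw [← star_eq_adjoint]; exact he_sa
        have ht' : t - (1 - e) * t * e ∈ S := ht
        have hta' : adjoint t - (1 - e) * adjoint t * e ∈ S := hta
        -- write t = s + c with s ∈ S, c = (1-e)*t*e
        set s := t - (1 - e) * t * e with hs
        set c := (1 - e) * t * e with hc
        have hts : t = s + c := by rw [hs]; abel
        -- adjoint t = adjoint s + adjoint c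
        have hadj : adjoint t = adjoint s + adjoint c := by
          rw [hts, map_add]
        -- (1-e) * adjoint s * e = 0 since e commutes with s and stars
        have hes : e * s = s * e := he_comm s ht'
        have hes' : e * adjoint s = adjoint s * e := by
          have := congrArg (fun z => ContinuousLinearMap.adjoint z) hes
          simp only [← star_eq_adjoint, star_mul, he_sa.star_eq] at this ⊢
          exact this.symm
        have h1 : (1 - e) * adjoint s * e = 0 := aux0 he_idem hes'
        -- adjoint c = e * adjoint t * (1 - e)
        have hadjc : adjoint c = e * adjoint t * (1 - e) := by
          rw [hc, ← star_eq_adjoint, star_mul, star_mul, he_sa.star_eq, star_sub, star_one,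
            he_sa.star_eq, star_eq_adjoint, ← mul_assoc]
        have h2 : (1 - e) * adjoint c * e = 0 := by
          rw [hadjc]
          have h0 : (1 - e) * e = 0 := by rw [sub_mul, one_mul, he_idem, sub_self]
          have h0' : (1 - e) * (e * adjoint t * (1 - e)) * e
              = ((1 - e) * e) * (adjoint t * ((1 - e) * e)) := by noncomm_ring
          rw [h0', h0, zero_mul]
        have hta_S : adjoint t ∈ S := by
          have : adjoint t - (1 - e) * adjoint t * e ∈ S := hta'
          have hz : (1 - e) * adjoint t * e = 0 := by
            rw [hadj]
            have : (1 - e) * (adjoint s + adjoint c) * e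
                = (1 - e) * adjoint s * e + (1 - e) * adjoint c * e := by noncomm_ring
            rw [this, h1, h2, add_zero]
          rwa [hz, sub_zero] at this
        -- now e commutes with adjoint t, hence with t, hence c = 0
        have het' : e * adjoint t = adjoint t * e := he_comm _ hta_S
        have het : e * t = t * e := by
          have := congrArg (fun z => ContinuousLinearMap.adjoint z) het'
          simp only [← star_eq_adjoint, star_mul, he_sa.star_eq, star_star] at this
          exact this.symm
        have hczero : c = 0 := by
          rw [hc]
          exact aux0 he_idem het
        have ht_S : t ∈ S := by
          have hts' : t = s := by rw [hts, hczero, add_zero]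
          rw [hts']
          exact ht'
        exact ⟨ht_S, hta_S⟩
      · rintro ⟨ht, hta⟩
        exact ⟨hST ht, hST hta⟩
    have hTtri : IsTriangular T := by
      unfold IsTriangular
      rw [hdiag]
      exact hS.1
    have hSeqT : S = T := hS.2 T hTtri hST
    -- conclude
    have : (1 - e) * X * e ∈ T := by
      show (1 - e) * X * e - (1 - e) * ((1 - e) * X * e) * e ∈ S
      have huu : ((1 : H →L[ℂ] H) - e) * (1 - e) = 1 - e := by
        have : ((1 : H →L[ℂ] H) - e) * (1 - e) = 1 - e - (e - e * e) := by noncomm_ring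
        rw [this, he_idem, sub_self, sub_zero]
      have : (1 - e) * ((1 - e) * X * e) * e = (1 - e) * X * e := by
        have h' : (1 - e) * ((1 - e) * X * e) * e = ((1 - e) * (1 - e)) * X * (e * e) := by
          noncomm_ring
        rw [h', huu, he_idem]
      rw [this, sub_self]
      exact zero_mem S
    rw [← hSeqT] at this
    exact this
  -- apply to both e and 1 - e
  have h1 : ∀ X : H →L[ℂ] H, (1 - e) * X * e ∈ S := main e he_sa he_idem he_comm
  have h1e : IsSelfAdjoint (1 - e) := by
    rw [IsSelfAdjoint, star_sub, star_one, he_sa.star_eq]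
  have h1i : (1 - e) * (1 - e) = 1 - e := by
    have : ((1 : H →L[ℂ] H) - e) * (1 - e) = 1 - e - (e - e * e) := by noncomm_ring
    rw [this, he_idem, sub_self, sub_zero]
  have h1c : ∀ a ∈ S, (1 - e) * a = a * (1 - e) := by
    intro a ha
    rw [sub_mul, mul_sub, one_mul, mul_one, he_comm a ha]
  have h2 : ∀ X : H →L[ℂ] H, e * X * (1 - e) ∈ S := by
    intro X
    have := main (1 - e) h1e h1i h1c X
    rwa [sub_sub_cancel] at this
  -- e is in the diagonal
  have heD : e ∈ diagonal S := by
    apply hS.1.2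
    intro a ha
    exact (he_comm a ha.1).symm
  -- each corner element is in the diagonal, hence commutes with e, hence is zero
  have hzero : ∀ X : H →L[ℂ] H, (1 - e) * X * e = 0 := by
    intro X
    have hp : (1 - e) * X * e ∈ diagonal S := by
      refine ⟨h1 X, ?_⟩
      have : ContinuousLinearMap.adjoint ((1 - e) * X * e)
          = e * ContinuousLinearMap.adjoint X * (1 - e) := by
        rw [← star_eq_adjoint, star_mul, star_mul, he_sa.star_eq, star_sub, star_one,
          he_sa.star_eq, star_eq_adjoint, ← mul_assoc]
      rw [this]
      exact h2 _
    have hcomm := hS.1.1 _ hp _ heD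
    -- ((1-e) X e) * e = e * ((1-e) X e); LHS = (1-e) X e, RHS = 0
    have hL : ((1 - e) * X * e) * e = (1 - e) * X * e := by
      rw [mul_assoc ((1 - e) * X) e e, he_idem]
    have hR : e * ((1 - e) * X * e) = 0 := by
      have h0 : e * (1 - e) = 0 := by rw [mul_sub, mul_one, he_idem, sub_self]
      have : e * ((1 - e) * X * e) = (e * (1 - e)) * (X * e) := by noncomm_ring
      rw [this, h0, zero_mul]
    rw [hL, hR] at hcomm
    exact hcomm
  -- conclude e = 0 or e = 1
  by_cases he0 : e = 0
  · exact Or.inl he0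
  · right
    -- e ≠ 0 : pick x with e x ≠ 0
    have hex : ∃ x : H, e x ≠ 0 := by
      by_contra hcon
      push_neg at hcon
      exact he0 (ContinuousLinearMap.ext fun x => by simp [hcon x])
    obtain ⟨x, hx⟩ := hex
    -- show (1 - e) y = 0 for all y
    have hall : ∀ y : H, ((1 : H →L[ℂ] H) - e) y = 0 := by
      intro y
      set X : H →L[ℂ] H := (innerSL ℂ (e x)).smulRight y with hX
      have := congrArg (fun T : H →L[ℂ] H => T x) (hzero X)
      simp only [ContinuousLinearMap.mul_apply, ContinuousLinearMap.zero_apply] at this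
      have hXex : X (e x) = ((‖e x‖ : ℂ) ^ 2) • y := by
        rw [hX]
        simp only [ContinuousLinearMap.smulRight_apply, innerSL_apply_apply]
        rw [inner_self_eq_norm_sq_to_K]
        norm_num
      rw [hXex] at this
      have hne : ((‖e x‖ : ℂ) ^ 2) ≠ 0 := by
        simp only [ne_eq, pow_eq_zero_iff, Complex.ofReal_eq_zero, norm_eq_zero]
        exact fun h => hx (by simpa using h)
      rw [map_smul] at this
      exact (smul_eq_zero.mp this).resolve_left hne
    have : (1 : H →L[ℂ] H) - e = 0 := ContinuousLinearMap.ext fun y => by simpa using hall y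
    have := sub_eq_zero.mp this
    exact this.symm
open ContinuousLinearMap in
lemma selfadj_comm_scalar {H : Type*} [NormedAddCommGroup H] [InnerProductSpace ℂ H]
    [CompleteSpace H] [Nontrivial (H →L[ℂ] H)] {S : Subalgebra ℂ (H →L[ℂ] H)}
    (hS : IsMaxTriangular S) (c : H →L[ℂ] H) (hc : IsSelfAdjoint c)
    (hcomm : ∀ a ∈ S, c * a = a * c) : ∃ α : ℝ, c = algebraMap ℝ (H →L[ℂ] H) α := by
  have hsub : (spectrum ℝ c).Subsingleton := by
    intro α hα β hβ
    by_contra hne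
    set δ : ℝ := |α - β| / 2 with hδ
    have hδpos : 0 < δ := by
      have : α - β ≠ 0 := sub_ne_zero.mpr hne
      positivity
    set f : ℝ → ℝ := fun t => max 0 (1 - |t - α| / δ) with hfdef
    set g : ℝ → ℝ := fun t => max 0 (1 - |t - β| / δ) with hgdef
    have hfc : Continuous f :=
      continuous_const.max
        (continuous_const.sub (((continuous_id.sub continuous_const).abs).div_const δ))
    have hgc : Continuous g :=
      continuous_const.max
        (continuous_const.sub (((continuous_id.sub continuous_const).abs).div_const δ))
    have hfα : f α = 1 := by simp [hfdef]
    have hgβ : g β = 1 := by simp [hgdef]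
    have hfg : ∀ t, g t * f t = 0 := by
      intro t
      by_cases h : δ ≤ |t - α|
      · have : f t = 0 := by
          rw [hfdef]
          simp only [max_eq_left_iff]
          rw [sub_nonpos]
          rw [le_div_iff₀ hδpos, one_mul]
          exact h
        rw [this, mul_zero]
      · have hβt : δ ≤ |t - β| := by
          push_neg at h
          have h1 : |α - β| ≤ |t - α| + |t - β| := by
            have := abs_sub_abs_le_abs_sub (α - β) (α - t)
            calc |α - β| = |(α - t) + (t - β)| := by ring_nf
              _ ≤ |α - t| + |t - β| := abs_add_le _ _
              _ = |t - α| + |t - β| := by rw [abs_sub_comm α t]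
          nlinarith [abs_nonneg (t - α), abs_nonneg (t - β)]
        have : g t = 0 := by
          rw [hgdef]
          simp only [max_eq_left_iff]
          rw [sub_nonpos, le_div_iff₀ hδpos, one_mul]
          exact hβt
        rw [this, zero_mul]
    set p := cfc f c with hp
    set q := cfc g c with hq
    have hqp : q * p = 0 := by
      rw [hq, hp, ← cfc_mul g f c (hgc.continuousOn) (hfc.continuousOn)]
      have : (fun t => g t * f t) = (fun _ : ℝ => (0 : ℝ)) := funext hfg
      rw [this, cfc_const 0 c hc, map_zero]
    have hp1 : (1 : ℝ) ∈ spectrum ℝ p := by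
      rw [hp, cfc_map_spectrum f c hc hfc.continuousOn]
      exact ⟨α, hα, hfα⟩
    have hq1 : (1 : ℝ) ∈ spectrum ℝ q := by
      rw [hq, cfc_map_spectrum g c hc hgc.continuousOn]
      exact ⟨β, hβ, hgβ⟩
    have hpne : p ≠ 0 := by
      intro h
      rw [h, spectrum.zero_eq] at hp1
      exact one_ne_zero (Set.mem_singleton_iff.mp hp1)
    have hqne : q ≠ 0 := by
      intro h
      rw [h, spectrum.zero_eq] at hq1
      exact one_ne_zero (Set.mem_singleton_iff.mp hq1)
    -- the closed subspace K = closure of range p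
    set M : Submodule ℂ H := LinearMap.range (p : H →ₗ[ℂ] H) with hM
    set K : Submodule ℂ H := M.topologicalClosure with hK
    haveI : CompleteSpace K := M.isClosed_topologicalClosure.completeSpace_coe
    set e : H →L[ℂ] H := K.subtypeL ∘L K.orthogonalProjectionOnto with he
    have he_mem : ∀ x, e x ∈ K := fun x => (K.orthogonalProjectionOnto x).2
    have he_of_mem : ∀ x ∈ K, e x = x := fun x hx => Submodule.starProjection_eq_self_iff.mpr hx
    have he_sa : IsSelfAdjoint e := isSelfAdjoint_starProjection K
    have he_idem : e * e = e := by
      ext x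
      exact he_of_mem _ (he_mem x)
    have he_ker : ∀ x, x ∈ Kᗮ → e x = 0 := by
      intro x hx
      show (↑(K.orthogonalProjectionOnto x) : H) = 0
      rw [Submodule.orthogonalProjectionOnto_apply_of_mem_orthogonal hx]
      simp
    -- invariant subspaces give commutation
    have hcomm_e : ∀ a : H →L[ℂ] H, (∀ k ∈ K, a k ∈ K) → (∀ k ∈ K, adjoint a k ∈ K) →
        e * a = a * e := by
      intro a hKa hKa'
      ext x
      show e (a x) = a (e x)
      have h1 : a (e x) ∈ K := hKa _ (he_mem x)
      have hperp : e (a (x - e x)) = 0 := by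
        apply he_ker
        rw [Submodule.mem_orthogonal]
        intro k hk
        rw [← ContinuousLinearMap.adjoint_inner_left]
        have hx' : x - e x ∈ Kᗮ := Submodule.sub_starProjection_mem_orthogonal x
        exact hx' _ (hKa' k hk)
      have hxd : a x = a (e x) + a (x - e x) := by
        rw [← map_add]
        congr 1
        abel
      rw [hxd, map_add, hperp, add_zero, he_of_mem _ h1]
    -- K is invariant under S and its adjoints
    have hKinv : ∀ a : H →L[ℂ] H, Commute a p → ∀ k ∈ K, a k ∈ K := by
      intro a hap k hk
      have hk' : k ∈ closure (M : Set H) := by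
        rw [← Submodule.topologicalClosure_coe]
        exact hk
      have : a k ∈ closure (M : Set H) := by
        apply map_mem_closure a.continuous hk'
        rintro w ⟨z, rfl⟩
        show a (p z) ∈ M
        have : a (p z) = p (a z) := by
          have := congrArg (fun T : H →L[ℂ] H => T z) hap.eq
          simpa [ContinuousLinearMap.mul_apply] using this
        rw [this]
        exact ⟨a z, rfl⟩
      rw [← Submodule.topologicalClosure_coe] at this
      exact this
    have he_comm : ∀ a ∈ S, e * a = a * e := by
      intro a ha
      have hac : Commute a c := (hcomm a ha).symm
      have hasc : Commute (adjoint a) c := by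
        have h1 := congrArg star (hcomm a ha)
        rw [star_mul, star_mul, hc.star_eq] at h1
        rw [← star_eq_adjoint]
        exact h1
      exact hcomm_e a (hKinv a (commute_cfc hc hac f)) (hKinv _ (commute_cfc hc hasc f))
    -- but e is a nontrivial projection: contradiction
    rcases proj_trivial hS e he_sa he_idem he_comm with h0 | h1
    · -- e = 0 contradicts p ≠ 0
      obtain ⟨x, hx⟩ : ∃ x, p x ≠ 0 := by
        by_contra hcon
        push_neg at hcon
        exact hpne (ContinuousLinearMap.ext fun x => by simp [hcon x])
      have hpx : p x ∈ K := Submodule.le_topologicalClosure M ⟨x, rfl⟩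
      have := he_of_mem _ hpx
      rw [h0] at this
      exact hx (by simpa using this.symm)
    · -- e = 1 contradicts q ≠ 0
      obtain ⟨x, hx⟩ : ∃ x, q x ≠ 0 := by
        by_contra hcon
        push_neg at hcon
        exact hqne (ContinuousLinearMap.ext fun x => by simp [hcon x])
      have hxK : x ∈ K := by
        have : e x = x := by rw [h1]; simp
        rw [← this]
        exact he_mem x
      have hx0 : q x = 0 := by
        have hk' : x ∈ closure (M : Set H) := by
          rw [← Submodule.topologicalClosure_coe]
          exact hxK
        have : q x ∈ closure ({0} : Set H) := by
          apply map_mem_closure q.continuous hk'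
          rintro w ⟨z, rfl⟩
          show q (p z) ∈ ({0} : Set H)
          have := congrArg (fun T : H →L[ℂ] H => T z) hqp
          simpa [ContinuousLinearMap.mul_apply] using this
        simpa using this
      exact hx hx0
  -- now the spectrum is a subsingleton, so c is a scalar
  by_cases hne : (spectrum ℝ c).Nonempty
  · obtain ⟨α, hα⟩ := hne
    refine ⟨α, ?_⟩
    calc c = cfc (id : ℝ → ℝ) c := (cfc_id ℝ c hc).symm
      _ = cfc (fun _ : ℝ => α) c := cfc_congr (fun t ht => hsub ht hα)
      _ = algebraMap ℝ (H →L[ℂ] H) α := cfc_const α c hc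
  · refine ⟨0, ?_⟩
    rw [Set.not_nonempty_iff_eq_empty] at hne
    calc c = cfc (id : ℝ → ℝ) c := (cfc_id ℝ c hc).symm
      _ = cfc (fun _ : ℝ => (0 : ℝ)) c := cfc_congr (by rw [hne]; exact fun t ht => ht.elim)
      _ = algebraMap ℝ (H →L[ℂ] H) 0 := cfc_const 0 c hc

/-- The commutant of a maximal triangular subalgebra is trivial: any `b` commuting with
every element of `S` is a scalar multiple of the identity. -/
theorem commutant_trivial {H : Type*} [NormedAddCommGroup H] [InnerProductSpace ℂ H]
    [CompleteSpace H] {S : Subalgebra ℂ (H →L[ℂ] H)} (hS : IsMaxTriangular S)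
    (b : H →L[ℂ] H) (hb : ∀ a ∈ S, b * a = a * b) :
    ∃ α : ℂ, b = α • (1 : H →L[ℂ] H) := by
  rcases subsingleton_or_nontrivial (H →L[ℂ] H) with hsub | hnt
  · exact ⟨0, Subsingleton.elim _ _⟩
  have hDsa : ∀ a ∈ diagonal S, ContinuousLinearMap.adjoint a ∈ diagonal S := by
    rintro a ⟨h1, h2⟩
    exact ⟨h2, by rwa [ContinuousLinearMap.adjoint_adjoint]⟩
  have hbD : b ∈ diagonal S := hS.1.2 b fun a ha => (hb a ha.1).symm
  have hbstarD : star b ∈ diagonal S := by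
    rw [ContinuousLinearMap.star_eq_adjoint]
    apply hS.1.2
    intro a ha
    have ha' := hDsa a ha
    have h1 := congrArg star (hb _ ha'.1)
    rw [star_mul, star_mul, ← ContinuousLinearMap.star_eq_adjoint, star_star] at h1
    rw [← ContinuousLinearMap.star_eq_adjoint]
    exact h1
  have hnormal : b * star b = star b * b := hS.1.1 b hbD (star b) hbstarD
  have hbstar_comm : ∀ a ∈ S, star b * a = a * star b := by
    intro a ha
    exact (fuglede_aux hnormal (hb a ha).symm).eq.symm
  set c1 : H →L[ℂ] H := b + star b with hc1def
  set c2 : H →L[ℂ] H := Complex.I • (star b - b) with hc2def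
  have hc1sa : IsSelfAdjoint c1 := by
    rw [IsSelfAdjoint, hc1def, star_add, star_star, add_comm]
  have hc2sa : IsSelfAdjoint c2 := by
    rw [IsSelfAdjoint, hc2def, star_smul, star_sub, star_star, Complex.star_def,
      Complex.conj_I, neg_smul, ← smul_neg, neg_sub]
  have hc1comm : ∀ a ∈ S, c1 * a = a * c1 := by
    intro a ha
    rw [hc1def, add_mul, mul_add, hb a ha, hbstar_comm a ha]
  have hc2comm : ∀ a ∈ S, c2 * a = a * c2 := by
    intro a ha
    rw [hc2def, smul_mul_assoc, mul_smul_comm, sub_mul, mul_sub, hb a ha, hbstar_comm a ha]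
  obtain ⟨α₁, hα₁⟩ := selfadj_comm_scalar hS c1 hc1sa hc1comm
  obtain ⟨α₂, hα₂⟩ := selfadj_comm_scalar hS c2 hc2sa hc2comm
  refine ⟨((α₁ : ℂ) + Complex.I * (α₂ : ℂ)) / 2, ?_⟩
  have halg : ∀ r : ℝ, algebraMap ℝ (H →L[ℂ] H) r = (r : ℂ) • 1 := by
    intro r
    rw [Algebra.algebraMap_eq_smul_one]
    rw [show ((r : ℂ)) = algebraMap ℝ ℂ r from rfl, algebraMap_smul]
  have key : (2 : ℂ) • b = c1 + Complex.I • c2 := by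
    rw [hc1def, hc2def, smul_smul, Complex.I_mul_I, neg_smul, one_smul, neg_sub, two_smul]
    abel
  rw [hα₁, hα₂, halg, halg] at key
  have key2 : (2 : ℂ) • b = (((α₁ : ℂ) + Complex.I * (α₂ : ℂ))) • (1 : H →L[ℂ] H) := by
    rw [key, smul_smul, add_smul]
  have h2ne : (2 : ℂ) ≠ 0 := two_ne_zero
  calc b = (2 : ℂ)⁻¹ • ((2 : ℂ) • b) := by rw [smul_smul, inv_mul_cancel₀ h2ne, one_smul]
    _ = (((α₁ : ℂ) + Complex.I * (α₂ : ℂ)) / 2) • (1 : H →L[ℂ] H) := by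
        rw [key2, smul_smul, inv_mul_eq_div]
end

section
/- Let S be a maximal triangular subalgebra of B(H) and let δ : S → B(H) be a derivation. If b, c ∈ B(H) both implement δ, i.e., δ(a) = b a − a b = c a − a c for all a ∈ S, then b − c is a complex scalar multiple of the identity operator. -/
set_option maxHeartbeats 1000000
set_option synthInstance.maxHeartbeats 400000

/-- A derivation from a subalgebra `A` of `B(H)` into `B(H)`: a linear map obeying the
Leibniz product rule on `A`. -/
def IsDerivationOn {H : Type*} [NormedAddCommGroup H] [InnerProductSpace ℂ H]
    (A : Subalgebra ℂ (H →L[ℂ] H)) (δ : A →ₗ[ℂ] (H →L[ℂ] H)) : Prop :=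
  ∀ a b : A, δ (a * b) = δ a * (b : H →L[ℂ] H) + (a : H →L[ℂ] H) * δ b

/-! ### Auxiliary lemmas -/

section Fuglede

open NormedSpace

/-- Fuglede's theorem (Rosenblum's proof): if `n` is normal and commutes with `t`, then so
does `star n`. -/
lemma my_fuglede {A : Type*} [CStarAlgebra A] [Nontrivial A] {n t : A}
    (hn : Commute n (star n)) (h : Commute n t) : star n * t = t * star n := by
  let +nondep : NormedAlgebra ℚ A := .restrictScalars ℚ ℂ A
  set B := star n with hB
  have hFbd : ∀ z : ℂ, ‖exp (z • B) * t * exp (-(z • B))‖ ≤ ‖t‖ := by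
    intro z
    have h1 : exp (-((starRingEnd ℂ z) • n)) * t * exp ((starRingEnd ℂ z) • n) = t := by
      have hcomm : Commute (exp (-((starRingEnd ℂ z) • n))) t :=
        ((h.smul_left (starRingEnd ℂ z)).neg_left.exp_left)
      rw [hcomm.eq, mul_assoc,
        ← exp_add_of_commute ((Commute.refl ((starRingEnd ℂ z) • n)).neg_left),
        neg_add_cancel, exp_zero, mul_one]
    have hc1 : Commute (z • B) (-((starRingEnd ℂ z) • n)) :=
      (((hn.symm.smul_left z).smul_right (starRingEnd ℂ z)).neg_right)
    have h2 : exp (z • B) * exp (-((starRingEnd ℂ z) • n))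
        = exp (z • B + -((starRingEnd ℂ z) • n)) := (exp_add_of_commute hc1).symm
    have h3 : exp ((starRingEnd ℂ z) • n) * exp (-(z • B))
        = exp (-(z • B + -((starRingEnd ℂ z) • n))) := by
      rw [neg_add, neg_neg]
      refine (exp_add_of_commute ?_).symm.trans (by rw [add_comm])
      exact ((hn.smul_left (starRingEnd ℂ z)).smul_right z).neg_right
    set a := z • B + -((starRingEnd ℂ z) • n) with hadef
    have hskew : star a = -a := by
      simp only [hadef, star_add, star_neg, star_smul, hB, star_star, Complex.star_def,
        Complex.conj_conj]
      module
    have hu : exp a ∈ unitary A := exp_mem_unitary_of_mem_skewAdjoint hskew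
    have hu' : exp (-a) ∈ unitary A := by
      rw [← hskew, ← star_exp]
      exact Unitary.star_mem hu
    have h4 : exp (z • B) * t * exp (-(z • B)) = exp a * t * exp (-a) := by
      conv_lhs => rw [← h1]
      rw [← h2, ← h3]
      simp only [mul_assoc]
    calc ‖exp (z • B) * t * exp (-(z • B))‖
        = ‖exp a * t * exp (-a)‖ := by rw [h4]
      _ ≤ ‖exp a * t‖ * ‖exp (-a)‖ := norm_mul_le _ _
      _ ≤ ‖exp a‖ * ‖t‖ * ‖exp (-a)‖ := by gcongr; exact norm_mul_le _ _
      _ = ‖t‖ := by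
          rw [CStarRing.norm_of_mem_unitary hu, CStarRing.norm_of_mem_unitary hu']
          ring
  have hdiff : Differentiable ℂ (fun z : ℂ => exp (z • B) * t * exp (z • (-B))) := by
    intro z
    have d1 := (hasDerivAt_exp_smul_const (𝕂 := ℂ) B z).differentiableAt
    have d2 := (hasDerivAt_exp_smul_const (𝕂 := ℂ) (-B) z).differentiableAt
    exact ((d1.mul (differentiableAt_const t)).mul d2)
  have hconst : ∀ z : ℂ, exp (z • B) * t * exp (z • (-B))
      = exp ((0:ℂ) • B) * t * exp ((0:ℂ) • (-B)) := by
    intro z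
    apply hdiff.apply_eq_apply_of_bounded
    apply isBounded_iff_forall_norm_le.mpr
    refine ⟨‖t‖, ?_⟩
    rintro x ⟨z', rfl⟩
    simpa only [smul_neg] using hFbd z'
  have hconst' : ∀ z : ℂ, exp (z • B) * t = t * exp (z • B) := by
    intro z
    have h0 := hconst z
    simp only [zero_smul, exp_zero, one_mul, mul_one] at h0
    have h5 : exp (z • (-B)) * exp (z • B) = 1 := by
      rw [smul_neg, ← exp_add_of_commute ((Commute.refl (z • B)).neg_left),
        neg_add_cancel, exp_zero]
    have h6 := congrArg (fun y => y * exp (z • B)) h0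
    rwa [mul_assoc, h5, mul_one] at h6
  have hG : HasDerivAt (fun z : ℂ => exp (z • B) * t) (B * t) 0 := by
    have := (hasDerivAt_exp_smul_const (𝕂 := ℂ) B 0).mul_const t
    simpa using this
  have hH : HasDerivAt (fun z : ℂ => exp (z • B) * t) (t * B) 0 := by
    have := (hasDerivAt_exp_smul_const (𝕂 := ℂ) B 0).const_mul t
    simp only [zero_smul, exp_zero, mul_one, one_mul] at this
    have heq : (fun z : ℂ => t * exp (z • B)) = fun z : ℂ => exp (z • B) * t := by
      funext z; rw [hconst']
    rwa [heq] at this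
  exact hG.unique hH

end Fuglede

section Elemental

lemma my_cfc_mem_elemental {A : Type*} [CStarAlgebra A] (f : ℂ → ℂ) (d : A) [IsStarNormal d] :
    cfc f d ∈ StarAlgebra.elemental ℂ d := by
  refine cfc_cases (· ∈ StarAlgebra.elemental ℂ d) d f (zero_mem _) fun hf ha => ?_
  rw [cfcHom_eq_of_isStarNormal]
  exact SetLike.coe_mem _

lemma my_comm_of_elemental {A : Type*} [CStarAlgebra A] {x a u : A}
    (hxa : x * a = a * x) (hx : star x * a = a * star x)
    (hu : u ∈ StarAlgebra.elemental ℂ x) : u * a = a * u := by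
  induction hu using StarAlgebra.elemental.induction_on with
  | self => exact hxa
  | star_self => exact hx
  | algebraMap r => exact (Algebra.commutes r a).symm ▸ (Algebra.commutes r a)
  | add u hu v hv Hu Hv => rw [add_mul, mul_add, Hu, Hv]
  | mul u hu v hv Hu Hv => rw [mul_assoc, Hv, ← mul_assoc, Hu, mul_assoc]
  | closure s hs hcomm v hv =>
      have hsub : s ⊆ {w : A | w * a = a * w} := fun w hw => hcomm w hw
      have hcl : IsClosed {w : A | w * a = a * w} :=
        isClosed_eq (continuous_id.mul continuous_const) (continuous_const.mul continuous_id)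
      exact closure_minimal hsub hcl hv

end Elemental

section Bump

noncomputable def bumpf (s : ℝ) (c : ℂ) : ℂ → ℂ := fun z => ((max 0 (s - dist z c) : ℝ) : ℂ)

noncomputable def bumpf' (s : ℝ) (c : ℂ) : ℂ → ℂ :=
  fun z => ((max 0 (min 1 (2 - dist z c / s)) : ℝ) : ℂ)

lemma bumpf_cont (s : ℝ) (c : ℂ) : Continuous (bumpf s c) := by
  unfold bumpf; fun_prop

lemma bumpf'_cont (s : ℝ) (c : ℂ) : Continuous (bumpf' s c) := by
  unfold bumpf'; fun_prop

lemma bumpf_star (s : ℝ) (c : ℂ) (z : ℂ) : star (bumpf s c z) = bumpf s c z := by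
  simp [bumpf, Complex.conj_ofReal]

lemma bumpf'_star (s : ℝ) (c : ℂ) (z : ℂ) : star (bumpf' s c z) = bumpf' s c z := by
  simp [bumpf', Complex.conj_ofReal]

variable {s : ℝ} {c c₁ c₂ z : ℂ}

lemma bumpf_eq_zero (h : s ≤ dist z c) : bumpf s c z = 0 := by
  simp only [bumpf, Complex.ofReal_eq_zero]
  rw [max_eq_left (by linarith)]

lemma bumpf'_eq_zero (hs : 0 < s) (h : 2 * s ≤ dist z c) : bumpf' s c z = 0 := by
  simp only [bumpf', Complex.ofReal_eq_zero]
  have : 2 ≤ dist z c / s := (le_div_iff₀ hs).2 (by linarith)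
  rw [min_eq_right (by linarith), max_eq_left (by linarith)]

lemma bumpf'_eq_one (hs : 0 < s) (h : dist z c ≤ s) : bumpf' s c z = 1 := by
  simp only [bumpf']
  have : dist z c / s ≤ 1 := (div_le_one hs).2 h
  rw [min_eq_left (by linarith), max_eq_right (by linarith)]
  simp

lemma bumpf_self (hs : 0 < s) : bumpf s c c = (s : ℂ) := by
  simp [bumpf, max_eq_right hs.le]

lemma bumpb1 (hs : 0 < s) : bumpf' s c z * bumpf s c z = bumpf s c z := by
  rcases le_or_gt s (dist z c) with h | h
  · rw [bumpf_eq_zero h, mul_zero]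
  · rw [bumpf'_eq_one hs h.le, one_mul]

section dists
variable (hs : 0 < s) (hd : dist c₁ c₂ = 5 * s)
include hs hd

lemma bumpk4 : bumpf s c₂ z * bumpf s c₁ z = 0 := by
  rcases lt_or_ge (dist z c₁) s with h | h
  · have htri := dist_triangle c₁ z c₂
    rw [dist_comm c₁ z] at htri
    rw [bumpf_eq_zero (show s ≤ dist z c₂ by linarith), zero_mul]
  · rw [bumpf_eq_zero h, mul_zero]

lemma bumpk5 : bumpf' s c₂ z * bumpf s c₁ z = 0 := by
  rcases lt_or_ge (dist z c₁) s with h | h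
  · have htri := dist_triangle c₁ z c₂
    rw [dist_comm c₁ z] at htri
    rw [bumpf'_eq_zero hs (show 2 * s ≤ dist z c₂ by linarith), zero_mul]
  · rw [bumpf_eq_zero h, mul_zero]

lemma bumpk6 : bumpf s c₂ z * bumpf' s c₁ z = 0 := by
  rcases lt_or_ge (dist z c₁) (2 * s) with h | h
  · have htri := dist_triangle c₁ z c₂
    rw [dist_comm c₁ z] at htri
    rw [bumpf_eq_zero (show s ≤ dist z c₂ by linarith), zero_mul]
  · rw [bumpf'_eq_zero hs h, mul_zero]

lemma bumpk7 : bumpf' s c₁ z * bumpf' s c₂ z = 0 := by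
  rcases lt_or_ge (dist z c₁) (2 * s) with h | h
  · have htri := dist_triangle c₁ z c₂
    rw [dist_comm c₁ z] at htri
    rw [bumpf'_eq_zero hs (show 2 * s ≤ dist z c₂ by linarith), mul_zero]
  · rw [bumpf'_eq_zero hs h, zero_mul]

end dists

end Bump

section Corner

variable {H : Type*} [NormedAddCommGroup H] [InnerProductSpace ℂ H] [CompleteSpace H]

lemma star_eq_adj (a : H →L[ℂ] H) : star a = ContinuousLinearMap.adjoint a := rfl

/-- The corner algebra argument: if `p, q, P, Q` are selfadjoint operators commuting with a
maximal triangular algebra `S` and satisfying suitable product relations, then all corners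
`p * x * q` belong to `S`. -/
lemma corner_mem {S : Subalgebra ℂ (H →L[ℂ] H)} (hS : IsMaxTriangular S)
    (p q P Q : H →L[ℂ] H)
    (hpS : ∀ a ∈ S, p * a = a * p) (hqS : ∀ a ∈ S, q * a = a * q)
    (hPS : ∀ a ∈ S, P * a = a * P) (hQS : ∀ a ∈ S, Q * a = a * Q)
    (hp : IsSelfAdjoint p) (hq : IsSelfAdjoint q)
    (hP : IsSelfAdjoint P) (hQ : IsSelfAdjoint Q)
    (hpP : p * P = p) (hQq : Q * q = q) (hqQ : q * Q = q)
    (hqp : q * p = 0) (hQp : Q * p = 0)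
    (hPQ : P * Q = 0) (hQP : Q * P = 0) (hPp : P * p = p)
    (x : H →L[ℂ] H) : p * x * q ∈ S := by
  have hPSs : ∀ a ∈ S, P * star a = star a * P := by
    intro a ha
    have := congrArg star (hPS a ha)
    simpa [star_mul, hP.star_eq] using this.symm
  have hQSs : ∀ a ∈ S, Q * star a = star a * Q := by
    intro a ha
    have := congrArg star (hQS a ha)
    simpa [star_mul, hQ.star_eq] using this.symm
  let T : Subalgebra ℂ (H →L[ℂ] H) :=
    { carrier := {t | ∃ a ∈ S, ∃ y, t = a + p * y * q}
      mul_mem' := by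
        rintro t t' ⟨a, ha, y, rfl⟩ ⟨a', ha', y', rfl⟩
        refine ⟨a * a', S.mul_mem ha ha', a * y' + y * a', ?_⟩
        have e1 : a * (p * y' * q) = p * (a * y') * q := by
          rw [← mul_assoc, ← mul_assoc, ← hpS a ha, mul_assoc p a y']
        have e2 : (p * y * q) * a' = p * (y * a') * q := by
          rw [mul_assoc, hqS a' ha', ← mul_assoc, mul_assoc p y a']
        have e3 : (p * y * q) * (p * y' * q) = 0 := by
          rw [show (p * y * q) * (p * y' * q) = p * y * (q * p) * (y' * q) from by noncomm_ring,
            hqp, mul_zero, zero_mul]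
        rw [mul_add, add_mul, add_mul, e1, e2, e3]
        noncomm_ring
      one_mem' := ⟨1, S.one_mem, 0, by simp⟩
      add_mem' := by
        rintro t t' ⟨a, ha, y, rfl⟩ ⟨a', ha', y', rfl⟩
        refine ⟨a + a', S.add_mem ha ha', y + y', ?_⟩
        rw [mul_add, add_mul]
        abel
      zero_mem' := ⟨0, S.zero_mem, 0, by simp⟩
      algebraMap_mem' := fun r => ⟨algebraMap ℂ _ r, S.algebraMap_mem r, 0, by simp⟩ }
  have hST : S ≤ T := fun a ha => ⟨a, ha, 0, by simp⟩
  have hdiag : diagonal T = diagonal S := by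
    ext t
    constructor
    · rintro ⟨⟨a, ha, y, rfl⟩, hadj⟩
      rw [← star_eq_adj] at hadj
      obtain ⟨a', ha', y', heq⟩ := hadj
      have hstar : star (a + p * y * q) = star a + q * star y * p := by
        simp [star_mul, hp.star_eq, hq.star_eq, mul_assoc]
      rw [hstar] at heq
      have key : q * star y * p = 0 := by
        have c1 : Q * (star a + q * star y * p) * P = q * star y * p := by
          rw [mul_add, add_mul, hQSs a ha, mul_assoc (star a) Q P, hQP, mul_zero, zero_add,
            ← mul_assoc, ← mul_assoc, hQq, mul_assoc (q * star y) p P,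
            mul_assoc q (star y) (p * P), hpP, ← mul_assoc]
        have c2 : Q * (a' + p * y' * q) * P = 0 := by
          rw [mul_add, add_mul, hQS a' ha', mul_assoc a' Q P, hQP, mul_zero, zero_add,
            ← mul_assoc, ← mul_assoc, hQp, zero_mul, zero_mul, zero_mul]
        rw [← c1, heq, c2]
      have hpyq : p * y * q = 0 := by
        have := congrArg star key
        simpa [star_mul, hp.star_eq, hq.star_eq, mul_assoc] using this
      rw [key, add_zero] at heq
      rw [hpyq, add_zero]
      have key2 : p * y' * q = 0 := by
        have c1 : P * star a * Q = 0 := by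
          rw [hPSs a ha, mul_assoc, hPQ, mul_zero]
        have c2 : P * (a' + p * y' * q) * Q = p * y' * q := by
          rw [mul_add, add_mul, hPS a' ha', mul_assoc a' P Q, hPQ, mul_zero, zero_add,
            ← mul_assoc, ← mul_assoc, hPp, mul_assoc (p * y') q Q,
            mul_assoc p y' (q * Q), hqQ, ← mul_assoc]
        rw [← c2, ← heq, c1]
      rw [key2, add_zero] at heq
      exact ⟨ha, by rw [← star_eq_adj, heq]; exact ha'⟩
    · rintro ⟨ha, hadj⟩
      exact ⟨hST ha, hST hadj⟩
  have hTtri : IsTriangular T := by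
    unfold IsTriangular
    rw [hdiag]
    exact hS.1
  have hSeq : S = T := hS.2 T hTtri hST
  have : p * x * q ∈ T := ⟨0, S.zero_mem, x, by simp⟩
  rwa [← hSeq] at this

end Corner

/-- Any two operators implementing the same derivation on a maximal triangular
subalgebra differ by a scalar multiple of the identity. -/
theorem implementing_unique_upto_scalar {H : Type*} [NormedAddCommGroup H]
    [InnerProductSpace ℂ H] [CompleteSpace H] {S : Subalgebra ℂ (H →L[ℂ] H)}
    (hS : IsMaxTriangular S) (δ : S →ₗ[ℂ] (H →L[ℂ] H)) (hδ : IsDerivationOn S δ)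
    (b c : H →L[ℂ] H)
    (hb : ∀ a : S, δ a = b * (a : H →L[ℂ] H) - (a : H →L[ℂ] H) * b)
    (hc : ∀ a : S, δ a = c * (a : H →L[ℂ] H) - (a : H →L[ℂ] H) * c) :
    ∃ α : ℂ, b - c = α • (1 : H →L[ℂ] H) := by
  rcases subsingleton_or_nontrivial H with hH | hH
  · exact ⟨0, Subsingleton.elim _ _⟩
  haveI : Nontrivial (H →L[ℂ] H) := ⟨1, 0, fun h => by
    obtain ⟨x, hx⟩ := exists_ne (0 : H)
    exact hx (by simpa using congrFun (congrArg DFunLike.coe h) x)⟩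
  set d := b - c with hd
  -- d commutes with S
  have hdS : ∀ a ∈ S, d * a = a * d := by
    intro a ha
    have h1 := (hb ⟨a, ha⟩).symm.trans (hc ⟨a, ha⟩)
    have h2 : b * a - c * a = a * b - a * c := by
      rw [← sub_eq_sub_iff_sub_eq_sub]
      exact h1
    rw [hd, sub_mul, mul_sub, h2]
  -- d lies in the diagonal of S
  have hdD : d ∈ diagonal S := hS.1.2 d (fun a ha => (hdS a ha.1).symm)
  have hsdD : star d ∈ diagonal S := by
    refine ⟨by rw [star_eq_adj]; exact hdD.2, ?_⟩
    rw [star_eq_adj, ContinuousLinearMap.adjoint_adjoint]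
    exact hdD.1
  have hnormal : d * star d = star d * d := hS.1.1 d hdD (star d) hsdD
  haveI hdn : IsStarNormal d := ⟨hnormal.symm⟩
  have hdstarS : ∀ a ∈ S, star d * a = a * star d := fun a ha =>
    my_fuglede hnormal (hdS a ha)
  by_cases hsp : ∀ z ∈ spectrum ℂ d, ∀ w ∈ spectrum ℂ d, z = w
  · obtain ⟨z₀, hz₀⟩ := spectrum.nonempty d
    refine ⟨z₀, ?_⟩
    have hsub : spectrum ℂ d ⊆ {z₀} := fun w hw => by
      simpa using hsp w hw z₀ hz₀
    have : d = algebraMap ℂ (H →L[ℂ] H) z₀ :=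
      CFC.eq_algebraMap_of_spectrum_subset_singleton (R := ℂ) d z₀ hsub
    rw [this, Algebra.algebraMap_eq_smul_one]
  · exfalso
    push_neg at hsp
    obtain ⟨lam, hlam, mu, hmu, hne⟩ := hsp
    set s : ℝ := dist lam mu / 5 with hs5
    have hs : 0 < s := by
      have : 0 < dist lam mu := dist_pos.2 hne
      positivity
    have hdist : dist lam mu = 5 * s := by rw [hs5]; ring
    -- the four operators
    set p := cfc (bumpf s lam) d with hpdef
    set P := cfc (bumpf' s lam) d with hPdef
    set q := cfc (bumpf s mu) d with hqdef
    set Q := cfc (bumpf' s mu) d with hQdef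
    -- multiplication rule for cfc
    have mulcfc : ∀ (f g h : ℂ → ℂ), Continuous f → Continuous g →
        (∀ z, f z * g z = h z) → cfc f d * cfc g d = cfc h d := by
      intro f g h hf hg hfg
      rw [← cfc_mul f g d hf.continuousOn hg.continuousOn]
      exact cfc_congr fun z _ => hfg z
    have cfczero : cfc (fun _ : ℂ => (0:ℂ)) d = 0 := cfc_zero ℂ d
    have mulcfc0 : ∀ (f g : ℂ → ℂ), Continuous f → Continuous g →
        (∀ z, f z * g z = 0) → cfc f d * cfc g d = 0 := by
      intro f g hf hg hfg
      rw [mulcfc f g (fun _ : ℂ => (0:ℂ)) hf hg hfg, cfczero]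
    -- commutation with S
    have hcomm : ∀ (f : ℂ → ℂ), ∀ a ∈ S, cfc f d * a = a * cfc f d := fun f a ha =>
      my_comm_of_elemental (hdS a ha) (hdstarS a ha) (my_cfc_mem_elemental f d)
    -- selfadjointness
    have hsa : ∀ (f : ℂ → ℂ), (∀ z, star (f z) = f z) → IsSelfAdjoint (cfc f d) := by
      intro f hf
      rw [IsSelfAdjoint, ← cfc_star]
      exact cfc_congr fun z _ => hf z
    -- product relations
    have hpP : p * P = p := by
      rw [hpdef, hPdef]
      refine (mulcfc _ _ _ (bumpf_cont s lam) (bumpf'_cont s lam) fun z => ?_)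
      rw [mul_comm]; exact bumpb1 hs
    have hPp : P * p = p :=
      mulcfc _ _ _ (bumpf'_cont s lam) (bumpf_cont s lam) (fun z => bumpb1 hs)
    have hQq : Q * q = q :=
      mulcfc _ _ _ (bumpf'_cont s mu) (bumpf_cont s mu) (fun z => bumpb1 hs)
    have hqQ : q * Q = q := by
      refine (mulcfc _ _ _ (bumpf_cont s mu) (bumpf'_cont s mu) fun z => ?_)
      rw [mul_comm]; exact bumpb1 hs
    have hqp : q * p = 0 :=
      mulcfc0 _ _ (bumpf_cont s mu) (bumpf_cont s lam) (fun z => bumpk4 hs hdist)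
    have hQp : Q * p = 0 :=
      mulcfc0 _ _ (bumpf'_cont s mu) (bumpf_cont s lam) (fun z => bumpk5 hs hdist)
    have hPQ : P * Q = 0 :=
      mulcfc0 _ _ (bumpf'_cont s lam) (bumpf'_cont s mu) (fun z => bumpk7 hs hdist)
    have hQP : Q * P = 0 :=
      mulcfc0 _ _ (bumpf'_cont s mu) (bumpf'_cont s lam)
        (fun z => (mul_comm (bumpf' s mu z) (bumpf' s lam z)).trans (bumpk7 hs hdist))
    -- corners lie in S
    have hcorner : ∀ x : H →L[ℂ] H, p * x * q ∈ S :=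
      corner_mem hS p q P Q (hcomm _) (hcomm _) (hcomm _) (hcomm _)
        (hsa _ (bumpf_star s lam)) (hsa _ (bumpf_star s mu))
        (hsa _ (bumpf'_star s lam)) (hsa _ (bumpf'_star s mu))
        hpP hQq hqQ hqp hQp hPQ hQP hPp
    -- p * p ≠ 0 and q ≠ 0
    have hpp : p * p = cfc (fun z => bumpf s lam z * bumpf s lam z) d :=
      mulcfc _ _ _ (bumpf_cont s lam) (bumpf_cont s lam) (fun z => rfl)
    have hppne : p * p ≠ 0 := by
      intro h0
      have hmem : bumpf s lam lam * bumpf s lam lam ∈ spectrum ℂ (p * p) := by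
        rw [hpp]
        rw [cfc_map_spectrum (R := ℂ) (fun z => bumpf s lam z * bumpf s lam z) d hdn
          (((bumpf_cont s lam).mul (bumpf_cont s lam)).continuousOn)]
        exact Set.mem_image_of_mem _ hlam
      rw [h0, spectrum.zero_eq] at hmem
      rw [Set.mem_singleton_iff, bumpf_self hs, ← Complex.ofReal_mul,
        Complex.ofReal_eq_zero] at hmem
      nlinarith
    have hqne : q ≠ 0 := by
      intro h0
      have hmem : bumpf s mu mu ∈ spectrum ℂ q := by
        rw [hqdef, cfc_map_spectrum (R := ℂ) (bumpf s mu) d hdn ((bumpf_cont s mu).continuousOn)]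
        exact Set.mem_image_of_mem _ hmu
      rw [h0, spectrum.zero_eq] at hmem
      rw [Set.mem_singleton_iff, bumpf_self hs, Complex.ofReal_eq_zero] at hmem
      linarith
    -- pick vectors
    obtain ⟨u, hu⟩ : ∃ u, (p * p) u ≠ 0 := by
      by_contra h
      push_neg at h
      exact hppne (ContinuousLinearMap.ext fun u => by simpa using h u)
    obtain ⟨v, hv⟩ : ∃ v, q v ≠ 0 := by
      by_contra h
      push_neg at h
      exact hqne (ContinuousLinearMap.ext fun v => by simpa using h v)
    -- rank one operator sending q v to u
    set xop : H →L[ℂ] H :=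
      ((‖q v‖ : ℂ) ^ 2)⁻¹ • ((innerSL ℂ (q v)).smulRight u) with hxop
    have hxqv : xop (q v) = u := by
      rw [hxop]
      simp only [ContinuousLinearMap.smul_apply, ContinuousLinearMap.smulRight_apply,
        innerSL_apply_apply]
      rw [inner_self_eq_norm_sq_to_K, smul_smul]
      norm_cast
      show (Complex.ofReal (‖q v‖ ^ 2)⁻¹ * Complex.ofReal (‖q v‖ ^ 2)) • u = u
      rw [← Complex.ofReal_mul, inv_mul_cancel₀ (pow_ne_zero 2 (norm_ne_zero_iff.2 hv)),
        Complex.ofReal_one, one_smul]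
    -- contradiction
    have hzero : p * (p * xop * q) = 0 := by
      have h1 : p * (p * xop * q) = (p * xop * q) * p := hcomm (bumpf s lam) _ (hcorner xop)
      have h2 : (p * xop * q) * p = p * xop * (q * p) := by noncomm_ring
      rw [h1, h2, hqp, mul_zero]
    have h3 : p * (p * xop * q) = ((p * p) * xop) * q := by noncomm_ring
    have h4 := congrArg (fun A : H →L[ℂ] H => A v) (h3.symm.trans hzero)
    simp only [ContinuousLinearMap.mul_apply, ContinuousLinearMap.zero_apply] at h4
    rw [hxqv] at h4
    exact hu h4
end
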